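/- arXiv:1911.00319 — 5 statements merged into one kernel-verified Lean document; each statement's English description precedes it below -/
import Mathlib

section
/- Theorem 1, case U⁺₁,>: Assume there exist a > 0, τ > 0 and a continuously differentiable function b : [0,a] → ℝ with b(0) = 0 and b'(x) ≥ τ for all x ∈ [0,a], such that (x, b(x)) ∈ Ĝ for every x ∈ (0,a], and there exists c ∈ (0,a] such that every point (x,y) with 0 < x ≤ c and −c ≤ y < b(x) belongs to G. Then there exist h ∈ (0,c] and a function φ : [0,h] → ℝ with φ(0) = 0 which is a solution of y' = f₀(x,y) with graph in G̃ on [0,h]. -/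
open Set

set_option linter.unusedSectionVars false

open Set intervalIntegral Topology Filter

namespace PeanoAux

variable {h M : ℝ}

/-- The cone region. -/
def cone (h M : ℝ) : Set (ℝ × ℝ) := {p : ℝ × ℝ | p.1 ∈ Icc 0 h ∧ |p.2| ≤ M * p.1}

/-- clamp of the delayed time -/
def clamp (h ε t : ℝ) : ℝ := min (max (t - ε) 0) h

lemma clamp_mem (hh : 0 ≤ h) (ε t : ℝ) : clamp h ε t ∈ Icc (0:ℝ) h := by
  constructor
  · exact le_min (le_max_right _ _) hh
  · exact min_le_right _ _

lemma clamp_lip (h ε t t' : ℝ) : |clamp h ε t - clamp h ε t'| ≤ |t - t'| := by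
  have h1 : |max (t - ε) 0 - max (t' - ε) 0| ≤ |t - t'| := by
    calc |max (t - ε) 0 - max (t' - ε) 0| ≤ |(t - ε) - (t' - ε)| := abs_max_sub_max_le_abs _ _ _
      _ = |t - t'| := by ring_nf
  calc |clamp h ε t - clamp h ε t'| ≤ max |max (t - ε) 0 - max (t' - ε) 0| |h - h| :=
        abs_min_sub_min_le_max _ _ _ _
    _ ≤ |t - t'| := by
        rw [sub_self, abs_zero]
        exact max_le h1 (abs_nonneg _)

lemma clamp_le {ε t : ℝ} (hε : 0 ≤ ε) (ht : 0 ≤ t) : clamp h ε t ≤ t :=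
  le_trans (min_le_left _ _) (max_le (by linarith) ht)

lemma clamp_near {ε t : ℝ} (hε : 0 ≤ ε) (ht : t ∈ Icc (0:ℝ) h) : |clamp h ε t - t| ≤ ε := by
  have hh : (0:ℝ) ≤ h := le_trans ht.1 ht.2
  have h1 : clamp h ε t = max (t - ε) 0 := min_eq_left (max_le (by linarith [ht.2]) hh)
  rw [h1, abs_le]
  rcases le_total (t - ε) 0 with h2 | h2
  · rw [max_eq_right h2]; constructor <;> linarith [ht.1]
  · rw [max_eq_left h2]; constructor <;> linarith


variable {f : ℝ × ℝ → ℝ}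

/-- being a good approximate function -/
def Good (h M : ℝ) (ψ : ℝ → ℝ) : Prop :=
  (∀ t ∈ Icc (0:ℝ) h, |ψ t| ≤ M * t) ∧ (∀ t t' : ℝ, |ψ t - ψ t'| ≤ M * |t - t'|)

lemma Good.continuous (hM : 0 ≤ M) (hg : Good h M ψ) : Continuous ψ := by
  have : LipschitzWith (Real.toNNReal M) ψ := by
    apply LipschitzWith.of_dist_le_mul
    intro x y
    rw [Real.dist_eq, Real.dist_eq, Real.coe_toNNReal M hM]
    exact hg.2 x y
  exact this.continuous

lemma Good.cone_mem (hg : Good h M ψ) {t : ℝ} (ht : t ∈ Icc (0:ℝ) h) :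
    (t, ψ t) ∈ cone h M := ⟨ht, hg.1 t ht⟩

section Op

variable (hh : 0 < h) (hM : 0 ≤ M)
  (hfc : ContinuousOn f (cone h M))
  (hfb : ∀ p ∈ cone h M, |f p| ≤ M)

/-- the delayed integral operator -/
noncomputable def T (h ε : ℝ) (f : ℝ × ℝ → ℝ) (ψ : ℝ → ℝ) : ℝ → ℝ :=
  fun t => ∫ s in (0:ℝ)..(clamp h ε t), f (s, ψ s)

-- continuity of the integrand
include hfc hM in
lemma integrand_contOn {ψ : ℝ → ℝ} (hg : Good h M ψ) :
    ContinuousOn (fun s => f (s, ψ s)) (Icc (0:ℝ) h) := by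
  apply hfc.comp (continuous_id.prodMk (hg.continuous hM)).continuousOn
  intro s hs
  exact hg.cone_mem hs

include hfc hfb hM in
lemma integrand_intble {ψ : ℝ → ℝ} (hg : Good h M ψ) {u v : ℝ}
    (hu : u ∈ Icc (0:ℝ) h) (hv : v ∈ Icc (0:ℝ) h) :
    IntervalIntegrable (fun s => f (s, ψ s)) MeasureTheory.volume u v := by
  apply ContinuousOn.intervalIntegrable
  exact (integrand_contOn hM hfc hg).mono (uIcc_subset_Icc hu hv)

-- the primitive: basic estimates
include hh hfc hfb hM in
lemma prim_diff {ψ : ℝ → ℝ} (hg : Good h M ψ) {u v : ℝ}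
    (hu : u ∈ Icc (0:ℝ) h) (hv : v ∈ Icc (0:ℝ) h) :
    |(∫ s in (0:ℝ)..u, f (s, ψ s)) - ∫ s in (0:ℝ)..v, f (s, ψ s)| ≤ M * |u - v| := by
  rw [integral_interval_sub_left (integrand_intble hM hfc hfb hg (left_mem_Icc.2 hh.le) hu)
    (integrand_intble hM hfc hfb hg (left_mem_Icc.2 hh.le) hv)]
  have := intervalIntegral.norm_integral_le_of_norm_le_const
    (C := M) (f := fun s => f (s, ψ s)) (a := v) (b := u) ?_
  · simpa [Real.norm_eq_abs] using this
  · intro x hx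
    have hx' : x ∈ Icc (0:ℝ) h := uIcc_subset_Icc hv hu (uIoc_subset_uIcc hx)
    simpa [Real.norm_eq_abs] using hfb _ (hg.cone_mem hx')

include hfc hfb hM hh in
lemma good_T {ε : ℝ} (hε : 0 ≤ ε) {ψ : ℝ → ℝ} (hg : Good h M ψ) : Good h M (T h ε f ψ) := by
  constructor
  · intro t ht
    have h0 : (∫ s in (0:ℝ)..(0:ℝ), f (s, ψ s)) = 0 := intervalIntegral.integral_same
    have h1 := prim_diff hh hM hfc hfb hg (clamp_mem hh.le ε t) (left_mem_Icc.2 hh.le)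
    rw [h0, sub_zero, sub_zero, abs_of_nonneg (clamp_mem hh.le ε t).1] at h1
    exact h1.trans (mul_le_mul_of_nonneg_left (clamp_le hε ht.1) hM)
  · intro t t'
    have := prim_diff hh hM hfc hfb hg (clamp_mem hh.le ε t) (clamp_mem hh.le ε t')
    calc |T h ε f ψ t - T h ε f ψ t'| ≤ M * |clamp h ε t - clamp h ε t'| := this
      _ ≤ M * |t - t'| := mul_le_mul_of_nonneg_left (clamp_lip h ε t t') hM

include hh hfc hfb hM in
lemma good_iter {ε : ℝ} (hε : 0 ≤ ε) (k : ℕ) : Good h M ((T h ε f)^[k] (fun _ => 0)) := by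
  induction k with
  | zero =>
      refine ⟨fun t ht => by simpa using mul_nonneg hM ht.1, fun t t' => by
        simpa using mul_nonneg hM (abs_nonneg _)⟩
  | succ k ih =>
      rw [Function.iterate_succ_apply']
      exact good_T hh hM hfc hfb hε ih

include hh hfc hfb hM in
lemma iter_agree {ε : ℝ} (hε : 0 ≤ ε) :
    ∀ k : ℕ, ∀ t : ℝ, t ≤ k * ε → ((T h ε f)^[k] (fun _ => 0)) t = ((T h ε f)^[k+1] (fun _ => 0)) t := by
  intro k
  induction k with
  | zero =>
      intro t ht
      norm_num at ht
      have hc : clamp h ε t = 0 := by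
        have : max (t - ε) 0 = 0 := max_eq_right (by linarith)
        rw [clamp, this, min_eq_left hh.le]
      simp only [Function.iterate_zero, id_eq, zero_add, Function.iterate_one, T, hc,
        intervalIntegral.integral_same]
  | succ k ih =>
      intro t ht
      rw [Function.iterate_succ_apply', Function.iterate_succ_apply' (n := k+1), T, T]
      apply intervalIntegral.integral_congr
      intro s hs
      rw [uIcc_of_le (clamp_mem hh.le ε t).1] at hs
      have hsk : s ≤ k * ε := by
        have h1 : s ≤ clamp h ε t := hs.2
        have h2 : clamp h ε t ≤ max (t - ε) 0 := min_le_left _ _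
        have h3 : max (t - ε) 0 ≤ k * ε := by
          apply max_le _ (by positivity)
          push_cast at ht ⊢; linarith
        linarith
      show f (s, (T h ε f)^[k] (fun _ => 0) s) = f (s, (T h ε f)^[k+1] (fun _ => 0) s)
      rw [ih s hsk]

/-- the n-th delayed approximation -/
noncomputable def psi (h : ℝ) (f : ℝ × ℝ → ℝ) (n : ℕ) : ℝ → ℝ :=
  (T h (h / (n+1)) f)^[n+1] (fun _ => 0)

include hh hfc hfb hM in
lemma good_psi (n : ℕ) : Good h M (psi h f n) :=
  good_iter hh hM hfc hfb (by positivity) (n+1)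

include hh hfc hfb hM in
lemma psi_fixed (n : ℕ) {t : ℝ} (ht : t ∈ Icc (0:ℝ) h) :
    psi h f n t = T h (h / (n+1)) f (psi h f n) t := by
  have hkey := iter_agree hh hM hfc hfb (ε := h / (n+1)) (by positivity) (n+1) t
    (by rw [show ((n+1:ℕ):ℝ) * (h / (n+1)) = h by push_cast; field_simp]; exact ht.2)
  rw [psi, hkey, Function.iterate_succ_apply']

include hh hfc hfb hM in
lemma psi_err (n : ℕ) {x : ℝ} (hx : x ∈ Icc (0:ℝ) h) :
    |psi h f n x - ∫ s in (0:ℝ)..x, f (s, psi h f n s)| ≤ M * (h / (n+1)) := by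
  have hg := good_psi hh hM hfc hfb (n := n)
  have hfix := psi_fixed hh hM hfc hfb n hx
  rw [hfix, T]
  calc |(∫ s in (0:ℝ)..(clamp h (h/(n+1)) x), f (s, psi h f n s)) - ∫ s in (0:ℝ)..x, f (s, psi h f n s)|
      ≤ M * |clamp h (h/(n+1)) x - x| :=
        prim_diff hh hM hfc hfb hg (clamp_mem hh.le _ x) hx
    _ ≤ M * (h / (n+1)) := mul_le_mul_of_nonneg_left (clamp_near (by positivity) hx) hM

end Op

section AA

/-- candidate solution set -/
def Ssol (h M : ℝ) : Set C(↥(Icc (0:ℝ) h), ℝ) :=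
  {Φ | (∀ u v : ↥(Icc (0:ℝ) h), dist (Φ u) (Φ v) ≤ M * dist u v) ∧
    ∀ u : ↥(Icc (0:ℝ) h), |Φ u| ≤ M * (u : ℝ)}

lemma isCompact_Ssol (hh : 0 < h) (hM : 0 ≤ M) : IsCompact (Ssol h M) := by
  haveI : CompactSpace ↥(Icc (0:ℝ) h) := isCompact_iff_compactSpace.1 isCompact_Icc
  apply ArzelaAscoli.isCompact_of_equicontinuous
  · have himg : (ContinuousMap.toFun '' Ssol h M) =
        {g : ↥(Icc (0:ℝ) h) → ℝ | (∀ u v, dist (g u) (g v) ≤ M * dist u v) ∧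
          ∀ u, |g u| ≤ M * (u : ℝ)} := by
      ext g
      constructor
      · rintro ⟨Φ, hΦ, rfl⟩
        exact ⟨hΦ.1, hΦ.2⟩
      · rintro ⟨hg1, hg2⟩
        have hg : (∀ u v, dist (g u) (g v) ≤ M * dist u v) ∧ ∀ u, |g u| ≤ M * (u : ℝ) :=
          ⟨hg1, hg2⟩
        have hcont : Continuous g := by
          have : LipschitzWith (Real.toNNReal M) g := by
            apply LipschitzWith.of_dist_le_mul
            intro x y
            rw [Real.coe_toNNReal M hM]
            exact hg.1 x y
          exact this.continuous
        exact ⟨⟨g, hcont⟩, hg, rfl⟩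
    have hEq : {g : ↥(Icc (0:ℝ) h) → ℝ | (∀ u v, dist (g u) (g v) ≤ M * dist u v) ∧
        ∀ u, |g u| ≤ M * (u : ℝ)} = (⋂ u : ↥(Icc (0:ℝ) h), ⋂ v : ↥(Icc (0:ℝ) h),
          {g : ↥(Icc (0:ℝ) h) → ℝ | dist (g u) (g v) ≤ M * dist u v}) ∩
        ⋂ u : ↥(Icc (0:ℝ) h), {g : ↥(Icc (0:ℝ) h) → ℝ | |g u| ≤ M * (u : ℝ)} := by
      ext g
      simp only [Set.mem_inter_iff, Set.mem_iInter, Set.mem_setOf_eq]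
    rw [himg, hEq]
    have hcl : IsClosed ((⋂ u : ↥(Icc (0:ℝ) h), ⋂ v : ↥(Icc (0:ℝ) h),
          {g : ↥(Icc (0:ℝ) h) → ℝ | dist (g u) (g v) ≤ M * dist u v}) ∩
        ⋂ u : ↥(Icc (0:ℝ) h), {g : ↥(Icc (0:ℝ) h) → ℝ | |g u| ≤ M * (u : ℝ)}) := by
      apply IsClosed.inter
      · exact isClosed_iInter fun u => isClosed_iInter fun v =>
          isClosed_le ((continuous_apply u).dist (continuous_apply v)) continuous_const
      · exact isClosed_iInter fun u =>
          isClosed_le (continuous_apply u).abs continuous_const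
    apply (isCompact_univ_pi fun _ : ↥(Icc (0:ℝ) h) => isCompact_Icc
      (a := -(M*h)) (b := M*h)).of_isClosed_subset hcl
    intro g hg
    rw [Set.mem_univ_pi]
    intro u
    have h1 : |g u| ≤ M * (u : ℝ) := by
      have := hg.2
      rw [Set.mem_iInter] at this
      exact this u
    have h2 : (u : ℝ) ≤ h := u.2.2
    have h3 : M * (u : ℝ) ≤ M * h := mul_le_mul_of_nonneg_left h2 hM
    rcases abs_le.1 h1 with ⟨l, r⟩
    exact ⟨by linarith, by linarith⟩
  · apply Metric.equicontinuous_of_continuity_modulus (fun d => M * d)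
    · have hcm : Continuous fun d : ℝ => M * d := continuous_const.mul continuous_id
      simpa using hcm.tendsto (0:ℝ)
    · intro x y i
      exact i.2.1 x y

end AA

theorem peano (h M : ℝ) (hh : 0 < h) (hM : 0 ≤ M) (f : ℝ × ℝ → ℝ)
    (hfc : ContinuousOn f (cone h M)) (hfb : ∀ p ∈ cone h M, |f p| ≤ M) :
    ∃ φ : ℝ → ℝ, φ 0 = 0 ∧ ∀ x ∈ Icc (0:ℝ) h, |φ x| ≤ M * x ∧
      HasDerivWithinAt φ (f (x, φ x)) (Icc (0:ℝ) h) x := by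
  have hgood : ∀ n, Good h M (psi h f n) := good_psi hh hM hfc hfb
  let Ψ : ℕ → C(↥(Icc (0:ℝ) h), ℝ) := fun n =>
    ⟨fun u => psi h f n u, ((hgood n).continuous hM).comp continuous_subtype_val⟩
  have hΨS : ∀ n, Ψ n ∈ Ssol h M := by
    intro n
    constructor
    · intro u v
      rw [Subtype.dist_eq, Real.dist_eq, Real.dist_eq]
      exact (hgood n).2 u v
    · intro u
      exact (hgood n).1 u u.2
  obtain ⟨Φ, hΦS, κ, hκ, hconv⟩ := (isCompact_Ssol hh hM).isSeqCompact (fun n => hΨS n)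
  have hU : TendstoUniformly (fun k u => (Ψ (κ k)) u) (⇑Φ) Filter.atTop :=
    ContinuousMap.tendsto_iff_tendstoUniformly.1 hconv
  set φ : ℝ → ℝ := fun x => Φ (projIcc 0 h hh.le x) with hφdef
  have hφx : ∀ {x : ℝ} (hx : x ∈ Icc (0:ℝ) h), φ x = Φ ⟨x, hx⟩ := by
    intro x hx
    rw [hφdef]
    exact congrArg Φ (projIcc_of_mem hh.le hx)
  have hφgood : Good h M φ := by
    constructor
    · intro t ht
      rw [hφx ht]
      exact hΦS.2 ⟨t, ht⟩
    · intro t t'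
      have h1 := hΦS.1 (projIcc 0 h hh.le t) (projIcc 0 h hh.le t')
      have h2 := (LipschitzWith.projIcc (a := (0:ℝ)) (b := h) hh.le).dist_le_mul t t'
      rw [Subtype.dist_eq, Real.dist_eq] at h1
      rw [NNReal.coe_one, one_mul] at h2
      calc |φ t - φ t'| ≤ M * dist (projIcc 0 h hh.le t) (projIcc 0 h hh.le t') := h1
        _ ≤ M * |t - t'| := by
            rw [← Real.dist_eq]
            exact mul_le_mul_of_nonneg_left h2 hM
  have hφ0 : φ 0 = 0 := by
    have := hφgood.1 0 (left_mem_Icc.2 hh.le)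
    rw [mul_zero] at this
    exact abs_eq_zero.1 (le_antisymm this (abs_nonneg _))
  -- compactness of the cone, uniform continuity of f
  have hCcpt : IsCompact (cone h M) := by
    have hcl : IsClosed (cone h M) := by
      have heq : cone h M =
          ((fun p : ℝ × ℝ => p.1) ⁻¹' Icc 0 h) ∩ {p : ℝ × ℝ | |p.2| ≤ M * p.1} := rfl
      rw [heq]
      exact (isClosed_Icc.preimage continuous_fst).inter
        (isClosed_le continuous_snd.abs (continuous_const.mul continuous_fst))
    apply ((isCompact_Icc (a := (0:ℝ)) (b := h)).prod
      (isCompact_Icc (a := -(M*h)) (b := M*h))).of_isClosed_subset hcl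
    intro p hp
    rw [Set.mem_prod]
    refine ⟨hp.1, ?_⟩
    have h1 : |p.2| ≤ M * h := hp.2.trans (mul_le_mul_of_nonneg_left hp.1.2 hM)
    rcases abs_le.1 h1 with ⟨l, r⟩
    exact ⟨l, r⟩
  have hfu := hCcpt.uniformContinuousOn_of_continuous hfc
  rw [Metric.uniformContinuousOn_iff] at hfu
  -- the integral equation
  have hkey : ∀ x ∈ Icc (0:ℝ) h, φ x = ∫ s in (0:ℝ)..x, f (s, φ s) := by
    intro x hx
    by_contra hne
    set D := φ x - ∫ s in (0:ℝ)..x, f (s, φ s) with hD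
    have hDpos : 0 < |D| := abs_pos.2 (sub_ne_zero.2 hne)
    set η := |D| with hη
    obtain ⟨ζ, hζpos, hζ⟩ := hfu (η/(3*(h+1))) (by positivity)
    have hten : Filter.Tendsto (fun n : ℕ => M * (h / (n+1))) Filter.atTop (𝓝 0) := by
      have h2 := tendsto_one_div_add_atTop_nhds_zero_nat.const_mul (M*h)
      rw [mul_zero] at h2
      convert h2 using 2 with n
      field_simp
    have hE2 : ∀ᶠ k in Filter.atTop, M * (h / (κ k + 1)) < η/3 :=
      (hten.comp hκ.tendsto_atTop).eventually_lt_const (by positivity)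
    have hE1 := Metric.tendstoUniformly_iff.1 hU (min ζ (η/3)) (lt_min hζpos (by positivity))
    obtain ⟨k, hk1, hk2⟩ := (hE1.and hE2).exists
    set ψ := psi h f (κ k) with hψdef
    have hgψ := hgood (κ k)
    have t1 : |φ x - ψ x| < η/3 := by
      have := hk1 ⟨x, hx⟩
      rw [Real.dist_eq] at this
      rw [hφx hx]
      exact lt_of_lt_of_le this (min_le_right _ _)
    have t2 : |ψ x - ∫ s in (0:ℝ)..x, f (s, ψ s)| < η/3 :=
      lt_of_le_of_lt (psi_err hh hM hfc hfb (κ k) hx) hk2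
    have hint1 := integrand_intble hM hfc hfb hgψ (left_mem_Icc.2 hh.le) hx
    have hint2 := integrand_intble hM hfc hfb hφgood (left_mem_Icc.2 hh.le) hx
    have t3 : |(∫ s in (0:ℝ)..x, f (s, ψ s)) - ∫ s in (0:ℝ)..x, f (s, φ s)| ≤ η/3 := by
      rw [← intervalIntegral.integral_sub hint1 hint2]
      have hb := intervalIntegral.norm_integral_le_of_norm_le_const
        (C := η/(3*(h+1))) (a := (0:ℝ)) (b := x)
        (f := fun s => f (s, ψ s) - f (s, φ s)) ?_
      · rw [Real.norm_eq_abs] at hb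
        apply hb.trans
        rw [sub_zero, abs_of_nonneg hx.1]
        rw [div_mul_eq_mul_div, div_le_div_iff₀ (by linarith) (by norm_num : (0:ℝ) < 3)]
        nlinarith [hx.2, hDpos]
      · intro s hs
        have hs' : s ∈ Icc (0:ℝ) h := uIcc_subset_Icc (left_mem_Icc.2 hh.le) hx
          (uIoc_subset_uIcc hs)
        have hd : dist (ψ s) (φ s) < ζ := by
          have := hk1 ⟨s, hs'⟩
          rw [dist_comm] at this
          have h2 : dist ((Ψ (κ k)) (⟨s, hs'⟩ : ↥(Icc (0:ℝ) h))) (Φ ⟨s, hs'⟩) < ζ :=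
            lt_of_lt_of_le this (min_le_left _ _)
          rw [hφx hs']
          exact h2
        have hp : (s, ψ s) ∈ cone h M := hgψ.cone_mem hs'
        have hq : (s, φ s) ∈ cone h M := hφgood.cone_mem hs'
        have hdp : dist ((s, ψ s) : ℝ × ℝ) ((s, φ s) : ℝ × ℝ) < ζ := by
          rw [Prod.dist_eq]
          simp only [dist_self]
          exact max_lt hζpos hd
        have := hζ _ hp _ hq hdp
        rw [Real.dist_eq] at this
        rw [Real.norm_eq_abs]
        exact this.le
    have habs : |D| < η := by
      have hsplit : D = (φ x - ψ x) + ((ψ x - ∫ s in (0:ℝ)..x, f (s, ψ s))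
          + ((∫ s in (0:ℝ)..x, f (s, ψ s)) - ∫ s in (0:ℝ)..x, f (s, φ s))) := by
        rw [hD]; ring
      calc |D| ≤ |φ x - ψ x| + (|ψ x - ∫ s in (0:ℝ)..x, f (s, ψ s)|
            + |(∫ s in (0:ℝ)..x, f (s, ψ s)) - ∫ s in (0:ℝ)..x, f (s, φ s)|) := by
            rw [hsplit]
            exact (abs_add_le _ _).trans (by gcongr; exact abs_add_le _ _)
        _ < η/3 + (η/3 + η/3) := by
            apply add_lt_add_of_lt_of_le t1
            exact add_le_add t2.le t3
        _ = η := by ring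
    exact lt_irrefl _ (hη ▸ habs)
  -- conclusion via FTC
  set gg : ℝ → ℝ := fun s => f ((projIcc 0 h hh.le s : ℝ), φ s) with hggdef
  have hggcont : Continuous gg := by
    apply hfc.comp_continuous
    · exact (continuous_subtype_val.comp continuous_projIcc).prodMk (hφgood.continuous hM)
    · intro s
      refine ⟨(projIcc 0 h hh.le s).2, ?_⟩
      exact hΦS.2 (projIcc 0 h hh.le s)
  have hggeq : ∀ s ∈ Icc (0:ℝ) h, gg s = f (s, φ s) := by
    intro s hs
    rw [hggdef]
    simp only
    rw [projIcc_of_mem hh.le hs]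
  refine ⟨φ, hφ0, fun x hx => ⟨hφgood.1 x hx, ?_⟩⟩
  have hF : HasDerivAt (fun u => ∫ s in (0:ℝ)..u, gg s) (gg x) x :=
    (hggcont.integral_hasStrictDerivAt 0 x).hasDerivAt
  have hFW := hF.hasDerivWithinAt (s := Icc (0:ℝ) h)
  rw [show f (x, φ x) = gg x from (hggeq x hx).symm]
  apply hFW.congr
  · intro y hy
    rw [hkey y hy]
    apply intervalIntegral.integral_congr
    intro s hs
    exact (hggeq s (uIcc_subset_Icc (left_mem_Icc.2 hh.le) hy hs)).symm
  · rw [hkey x hx]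
    apply intervalIntegral.integral_congr
    intro s hs
    exact (hggeq s (uIcc_subset_Icc (left_mem_Icc.2 hh.le) hx hs)).symm

end PeanoAux


/-- Theorem 1, case U⁺₁,>. -/
theorem theorem1_case_U1_gt
    (G Ghat : Set (ℝ × ℝ)) (hGopen : IsOpen G) (hGhat : Ghat ⊆ frontier G)
    (f₀ : ℝ × ℝ → ℝ) (hf : ContinuousOn f₀ (G ∪ Ghat))
    (hO : ((0 : ℝ), (0 : ℝ)) ∈ Ghat) (hf0 : f₀ (0, 0) = 0)
    (a τ : ℝ) (ha : 0 < a) (hτ : 0 < τ)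
    (b b' : ℝ → ℝ)
    (hderiv : ∀ x ∈ Icc (0 : ℝ) a, HasDerivWithinAt b (b' x) (Icc (0 : ℝ) a) x)
    (hb'cont : ContinuousOn b' (Icc (0 : ℝ) a))
    (hb0 : b 0 = 0)
    (hb'τ : ∀ x ∈ Icc (0 : ℝ) a, τ ≤ b' x)
    (hcurve : ∀ x ∈ Ioc (0 : ℝ) a, (x, b x) ∈ Ghat)
    (c : ℝ) (hc : c ∈ Ioc (0 : ℝ) a)
    (hin : ∀ x y : ℝ, 0 < x → x ≤ c → -c ≤ y → y < b x → (x, y) ∈ G) :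
    ∃ h ∈ Ioc (0 : ℝ) c, ∃ φ : ℝ → ℝ, φ 0 = 0 ∧
      ∀ x ∈ Icc (0 : ℝ) h, (x, φ x) ∈ G ∪ Ghat ∧
        HasDerivWithinAt φ (f₀ (x, φ x)) (Icc (0 : ℝ) h) x := by
  -- the barrier grows at least linearly
  have hbcont : ContinuousOn b (Icc (0:ℝ) a) := fun x hx => (hderiv x hx).continuousWithinAt
  have hdiff : DifferentiableOn ℝ b (interior (Icc (0:ℝ) a)) := by
    rw [interior_Icc]
    intro y hy
    exact ((hderiv y (Ioo_subset_Icc_self hy)).hasDerivAt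
      (Icc_mem_nhds hy.1 hy.2)).differentiableAt.differentiableWithinAt
  have hblow : ∀ x ∈ Icc (0:ℝ) a, τ * x ≤ b x := by
    intro x hx
    have hge : ∀ y ∈ interior (Icc (0:ℝ) a), τ ≤ deriv b y := by
      rw [interior_Icc]
      intro y hy
      have hda := (hderiv y (Ioo_subset_Icc_self hy)).hasDerivAt (Icc_mem_nhds hy.1 hy.2)
      rw [hda.deriv]
      exact hb'τ y (Ioo_subset_Icc_self hy)
    have := (convex_Icc (0:ℝ) a).mul_sub_le_image_sub_of_le_deriv hbcont hdiff hge
      0 (left_mem_Icc.2 ha.le) x hx hx.1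
    rw [hb0] at this
    simpa using this
  -- continuity at the origin
  have hcw : ContinuousWithinAt f₀ (G ∪ Ghat) (0,0) := hf _ (Or.inr hO)
  rw [Metric.continuousWithinAt_iff] at hcw
  obtain ⟨δ, hδpos, hδ⟩ := hcw (τ/2) (by positivity)
  -- the interval length
  set h : ℝ := min c (min (δ/(1+τ)) (2*c/τ)) with hhdef
  have hhpos : 0 < h := by
    apply lt_min hc.1
    exact lt_min (div_pos hδpos (by linarith)) (div_pos (by linarith [hc.1]) hτ)
  have hhc : h ≤ c := min_le_left _ _
  have hhδ : h ≤ δ/(1+τ) := le_trans (min_le_right _ _) (min_le_left _ _)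
  have hhcτ : h ≤ 2*c/τ := le_trans (min_le_right _ _) (min_le_right _ _)
  -- the cone is inside the region
  have cone_sub : PeanoAux.cone h (τ/2) ⊆ G ∪ Ghat := by
    rintro p ⟨⟨hp1, hp2⟩, hp3⟩
    rcases eq_or_lt_of_le hp1 with h0 | h0
    · right
      have hz : p.2 = 0 := by
        rw [← h0, mul_zero] at hp3
        exact abs_eq_zero.1 (le_antisymm hp3 (abs_nonneg _))
      have : p = ((0:ℝ), (0:ℝ)) := by
        rw [Prod.ext_iff]
        exact ⟨h0.symm, hz⟩
      rw [this]
      exact hO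
    · left
      have hxc : p.1 ≤ c := le_trans hp2 hhc
      have hxa : p.1 ∈ Icc (0:ℝ) a := ⟨h0.le, hxc.trans hc.2⟩
      have hy1 : -c ≤ p.2 := by
        have h1 : |p.2| ≤ c := by
          apply hp3.trans
          calc τ/2 * p.1 ≤ τ/2 * (2*c/τ) := by
                apply mul_le_mul_of_nonneg_left (hp2.trans hhcτ) (by positivity)
            _ = c := by field_simp
        linarith [neg_abs_le p.2]
      have hy2 : p.2 < b p.1 := by
        have h1 : p.2 ≤ τ/2 * p.1 := le_trans (le_abs_self _) hp3
        have h2 : τ/2 * p.1 < τ * p.1 := by nlinarith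
        exact lt_of_le_of_lt h1 (h2.trans_le (hblow p.1 hxa))
      have := hin p.1 p.2 h0 hxc hy1 hy2
      rwa [Prod.mk.eta] at this
  -- the bound on f₀ over the cone
  have fbound : ∀ p ∈ PeanoAux.cone h (τ/2), |f₀ p| ≤ τ/2 := by
    rintro p hp
    obtain ⟨⟨hp1, hp2⟩, hp3⟩ := hp
    have hmem : p ∈ G ∪ Ghat := cone_sub ⟨⟨hp1, hp2⟩, hp3⟩
    have hdist : dist p ((0:ℝ), (0:ℝ)) < δ := by
      rw [Prod.dist_eq]
      apply max_lt
      · rw [Real.dist_eq, sub_zero, abs_of_nonneg hp1]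
        calc p.1 ≤ δ/(1+τ) := hp2.trans hhδ
          _ < δ := by
            rw [div_lt_iff₀ (by linarith)]
            nlinarith
      · rw [Real.dist_eq, sub_zero]
        apply lt_of_le_of_lt hp3
        have h1 : τ/2 * p.1 ≤ τ/2 * (δ/(1+τ)) :=
          mul_le_mul_of_nonneg_left (hp2.trans hhδ) (by positivity)
        apply lt_of_le_of_lt h1
        have hfrac : τ/2/(1+τ) < 1 := by
          rw [div_lt_one (by linarith)]
          linarith
        calc τ/2 * (δ/(1+τ)) = (τ/2/(1+τ)) * δ := by ring
          _ < 1 * δ := mul_lt_mul_of_pos_right hfrac hδpos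
          _ = δ := one_mul δ
    have := hδ hmem hdist
    rw [hf0, Real.dist_eq, sub_zero] at this
    exact this.le
  -- apply the Peano existence theorem on the cone
  obtain ⟨φ, hφ0, hφ⟩ := PeanoAux.peano h (τ/2) hhpos (by positivity) f₀
    (hf.mono cone_sub) fbound
  refine ⟨h, ⟨hhpos, hhc⟩, φ, hφ0, fun x hx => ?_⟩
  obtain ⟨hb1, hb2⟩ := hφ x hx
  exact ⟨cone_sub ⟨hx, hb1⟩, hb2⟩
end

section
/- Theorem 1, case U⁺₁,₌: Assume there exist a > 0 and a continuously differentiable function b : [0,a] → ℝ with b(0) = 0, b'(0) = 0, b convex on [0,a], such that (x, b(x)) ∈ Ĝ for every x ∈ (0,a], the boundary condition (5⁺ᵤ) holds: f₀(x, b(x)) ≤ b'(x) for all x ∈ (0,a], and there exists c ∈ (0,a] such that every point (x,y) with 0 < x ≤ c and −c ≤ y < b(x) belongs to G. Then there exist h ∈ (0,c] and a function φ : [0,h] → ℝ with φ(0) = 0 which is a solution of y' = f₀(x,y) with graph in G̃ on [0,h]. -/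
open Set
open Filter MeasureTheory intervalIntegral
open scoped Topology NNReal

/-- One-sided Gronwall-type comparison: if `f p ≤ 0` and `f' ≤ L * f` wherever `f > 0`,
then `f ≤ 0` on `[p, q]`. -/
lemma nonpos_of_deriv_le_mul {L p q : ℝ} {f f' : ℝ → ℝ} (hpq : p ≤ q)
    (hcont : ContinuousOn f (Icc p q))
    (hd : ∀ t ∈ Ioo p q, 0 < f t → HasDerivAt f (f' t) t ∧ f' t ≤ L * f t)
    (h0 : f p ≤ 0) : ∀ t ∈ Icc p q, f t ≤ 0 := by
  by_contra hcon
  push_neg at hcon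
  obtain ⟨x₁, hx₁, hfx₁⟩ := hcon
  have hpx₁ : p < x₁ := by
    rcases eq_or_lt_of_le hx₁.1 with h | h
    · exfalso; rw [← h] at hfx₁; linarith
    · exact h
  set S : Set ℝ := {x | x ∈ Icc p x₁ ∧ f x ≤ 0} with hS
  have hSclosed : IsClosed S := by
    have : S = Icc p x₁ ∩ f ⁻¹' (Iic 0) := by
      ext x; simp [hS, Set.mem_inter_iff, and_comm]
    rw [this]
    exact ContinuousOn.preimage_isClosed_of_isClosed
      (hcont.mono (Icc_subset_Icc le_rfl hx₁.2)) isClosed_Icc isClosed_Iic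
  have hSne : S.Nonempty := ⟨p, ⟨le_rfl, hpx₁.le⟩, h0⟩
  have hSbdd : BddAbove S := ⟨x₁, fun x hx => hx.1.2⟩
  set x₀ := sSup S with hx₀
  have hx₀S : x₀ ∈ S := hSclosed.csSup_mem hSne hSbdd
  have hx₀x₁ : x₀ < x₁ := by
    rcases eq_or_lt_of_le hx₀S.1.2 with h | h
    · exfalso; rw [h] at hx₀S; linarith [hx₀S.2]
    · exact h
  have hkey : ∀ x ∈ Ioc x₀ x₁, 0 < f x := by
    intro x hx
    by_contra hfx
    push_neg at hfx
    have : x ∈ S := ⟨⟨hx₀S.1.1.trans hx.1.le, hx.2⟩, hfx⟩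
    exact absurd (le_csSup hSbdd this) (not_le.mpr hx.1)
  set F : ℝ → ℝ := fun x => f x * Real.exp (-L * x) with hF
  have hder : ∀ x ∈ Ioo x₀ x₁,
      HasDerivAt F (f' x * Real.exp (-L * x) + f x * (Real.exp (-L * x) * -L)) x := by
    intro x hx
    have hfx : 0 < f x := hkey x ⟨hx.1, hx.2.le⟩
    have hxpq : x ∈ Ioo p q := ⟨lt_of_le_of_lt hx₀S.1.1 hx.1, lt_of_lt_of_le hx.2 hx₁.2⟩
    have hdf := (hd x hxpq hfx).1
    have hde : HasDerivAt (fun x => Real.exp (-L * x)) (Real.exp (-L * x) * -L) x := by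
      have := (Real.hasDerivAt_exp (-L * x)).comp x ((hasDerivAt_id x).const_mul (-L))
      simpa [Function.comp_def, mul_comm] using this
    exact hdf.mul hde
  have hanti : AntitoneOn F (Icc x₀ x₁) := by
    apply antitoneOn_of_deriv_nonpos (convex_Icc _ _)
    · exact ((hcont.mono (Icc_subset_Icc hx₀S.1.1 hx₁.2)).mul
        ((Real.continuous_exp.comp (continuous_const.mul continuous_id)).continuousOn))
    · intro x hx
      rw [interior_Icc] at hx
      exact (hder x hx).differentiableAt.differentiableWithinAt
    · intro x hx
      rw [interior_Icc] at hx
      have hfx : 0 < f x := hkey x ⟨hx.1, hx.2.le⟩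
      have hxpq : x ∈ Ioo p q := ⟨lt_of_le_of_lt hx₀S.1.1 hx.1, lt_of_lt_of_le hx.2 hx₁.2⟩
      rw [(hder x hx).deriv]
      have hle := (hd x hxpq hfx).2
      have hexp := Real.exp_pos (-L * x)
      nlinarith
  have h1 : F x₁ ≤ F x₀ :=
    hanti (left_mem_Icc.mpr hx₀x₁.le) (right_mem_Icc.mpr hx₀x₁.le) hx₀x₁.le
  have h2 : F x₀ ≤ 0 := mul_nonpos_of_nonpos_of_nonneg hx₀S.2 (Real.exp_pos _).le
  have h3 : 0 < F x₁ := mul_pos hfx₁ (Real.exp_pos _)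
  linarith

set_option maxHeartbeats 1000000 in
/-- Peano existence theorem on `[0, h]` for a globally defined, bounded, uniformly
continuous right-hand side, with initial condition `φ 0 = 0`. -/
theorem peano_ex {g : ℝ × ℝ → ℝ} (hgc : Continuous g) (hgu : UniformContinuous g)
    (hgb : ∀ p, |g p| ≤ 1 / 2) {h : ℝ} (hh : 0 < h) :
    ∃ φ : ℝ → ℝ, φ 0 = 0 ∧ (∀ x ∈ Icc (0 : ℝ) h, |φ x| ≤ x / 2) ∧
      ∀ x ∈ Icc (0 : ℝ) h, HasDerivWithinAt φ (g (x, φ x)) (Icc (0 : ℝ) h) x := by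
  have hgu' := Metric.uniformContinuous_iff.mp hgu
  -- Moreau-Yosida approximations
  set G : ℕ → ℝ → ℝ → ℝ :=
    fun n x y => ⨅ z : ℝ, (g (x, z) + ((n : ℝ) + 1) * |y - z|) with hGdef
  have hk0 : ∀ n : ℕ, (1 : ℝ) ≤ (n : ℝ) + 1 := fun n => by
    have : (0:ℝ) ≤ (n:ℝ) := Nat.cast_nonneg n
    linarith
  have hbdd : ∀ (n : ℕ) (x y : ℝ),
      BddBelow (range fun z => g (x, z) + ((n : ℝ) + 1) * |y - z|) := by
    intro n x y
    refine ⟨-(1 / 2), ?_⟩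
    rintro _ ⟨z, rfl⟩
    have h1 := abs_le.mp (hgb (x, z))
    have h2 : (0 : ℝ) ≤ ((n : ℝ) + 1) * |y - z| := by positivity
    linarith [h1.1]
  have hGle : ∀ n x y, G n x y ≤ g (x, y) := by
    intro n x y
    have := ciInf_le (hbdd n x y) y
    simpa using this
  have hGge : ∀ n x y, -(1 / 2) ≤ G n x y := by
    intro n x y
    refine le_ciInf fun z => ?_
    have h1 := abs_le.mp (hgb (x, z))
    have h2 : (0 : ℝ) ≤ ((n : ℝ) + 1) * |y - z| := by positivity
    linarith [h1.1]
  have hGabs : ∀ n x y, |G n x y| ≤ 1 / 2 := by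
    intro n x y
    rw [abs_le]
    exact ⟨hGge n x y, (hGle n x y).trans (abs_le.mp (hgb (x, y))).2⟩
  have hGmono : ∀ n x y, G n x y ≤ G (n + 1) x y := by
    intro n x y
    refine le_ciInf fun z => ?_
    refine (ciInf_le (hbdd n x y) z).trans ?_
    have : ((n : ℝ) + 1) * |y - z| ≤ (((n : ℕ) + 1 : ℕ) + 1) * |y - z| := by
      apply mul_le_mul_of_nonneg_right _ (abs_nonneg _)
      push_cast; linarith
    linarith
  have hGlip1 : ∀ (n : ℕ) (x y y' : ℝ),
      G n x y ≤ G n x y' + ((n : ℝ) + 1) * |y - y'| := by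
    intro n x y y'
    rw [← sub_le_iff_le_add]
    refine le_ciInf fun z => ?_
    rw [sub_le_iff_le_add]
    refine (ciInf_le (hbdd n x y) z).trans ?_
    have htri : |y - z| ≤ |y' - z| + |y - y'| := by
      have := abs_sub_le y y' z
      have h2 := abs_sub_le y' y z
      calc |y - z| ≤ |y - y'| + |y' - z| := abs_sub_le y y' z
        _ = |y' - z| + |y - y'| := by ring
    have hnn : (0 : ℝ) ≤ (n : ℝ) + 1 := by positivity
    nlinarith [abs_nonneg (y - z), abs_nonneg (y' - z), abs_nonneg (y - y')]
  have hGlipd : ∀ (n : ℕ) (x y y' : ℝ),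
      |G n x y - G n x y'| ≤ ((n : ℝ) + 1) * |y - y'| := by
    intro n x y y'
    rw [abs_sub_le_iff]
    constructor
    · have := hGlip1 n x y y'; linarith
    · have := hGlip1 n x y' y
      rw [abs_sub_comm] at this
      linarith
  have hGx : ∀ ε > (0 : ℝ), ∃ δ > (0 : ℝ), ∀ (n : ℕ) (x x' y : ℝ),
      dist x x' < δ → G n x y ≤ G n x' y + ε := by
    intro ε hε
    obtain ⟨δ, hδ, hδ'⟩ := hgu' ε hε
    refine ⟨δ, hδ, fun n x x' y hxx' => ?_⟩
    rw [← sub_le_iff_le_add]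
    refine le_ciInf fun z => ?_
    rw [sub_le_iff_le_add]
    refine (ciInf_le (hbdd n x y) z).trans ?_
    have hdist : dist ((x, z) : ℝ × ℝ) (x', z) < δ := by
      rw [Prod.dist_eq]
      simp only [dist_self]
      exact max_lt hxx' hδ
    have := hδ' hdist
    rw [Real.dist_eq, abs_sub_lt_iff] at this
    linarith [this.1]
  have hGcont : ∀ n : ℕ, Continuous (fun p : ℝ × ℝ => G n p.1 p.2) := by
    intro n
    rw [Metric.continuous_iff]
    rintro ⟨x, y⟩ ε hε
    obtain ⟨δ₁, hδ₁, hδ₁'⟩ := hGx (ε / 3) (by linarith)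
    have hkpos : (0 : ℝ) < (n : ℝ) + 1 := by positivity
    refine ⟨min δ₁ (ε / 3 / ((n : ℝ) + 1)), lt_min hδ₁ (by positivity), ?_⟩
    rintro ⟨x', y'⟩ hd
    rw [Prod.dist_eq, max_lt_iff] at hd
    have hdx : dist x' x < δ₁ := lt_of_lt_of_le hd.1 (min_le_left _ _)
    have hdy : dist y' y < ε / 3 / ((n : ℝ) + 1) := lt_of_lt_of_le hd.2 (min_le_right _ _)
    have h1 : |G n x' y' - G n x' y| ≤ ((n : ℝ) + 1) * |y' - y| := hGlipd n x' y' y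
    have h2 : G n x' y ≤ G n x y + ε / 3 := hδ₁' n x' x y hdx
    have h3 : G n x y ≤ G n x' y + ε / 3 := hδ₁' n x x' y (by rwa [dist_comm] at hdx)
    have h4 : ((n : ℝ) + 1) * |y' - y| < ε / 3 := by
      rw [Real.dist_eq] at hdy
      calc ((n : ℝ) + 1) * |y' - y| < ((n : ℝ) + 1) * (ε / 3 / ((n : ℝ) + 1)) := by
            exact mul_lt_mul_of_pos_left hdy hkpos
        _ = ε / 3 := by field_simp
    rw [Real.dist_eq, abs_sub_lt_iff]
    constructor
    · have := abs_sub_le_iff.mp h1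
      linarith [this.1]
    · have := abs_sub_le_iff.mp h1
      linarith [this.2]
  have hGunif : ∀ ε > (0 : ℝ), ∃ N : ℕ, ∀ n ≥ N, ∀ x y, g (x, y) - ε ≤ G n x y := by
    intro ε hε
    obtain ⟨δ, hδ, hδ'⟩ := hgu' ε hε
    refine ⟨⌈1 / δ⌉₊, fun n hn x y => ?_⟩
    refine le_ciInf fun z => ?_
    by_cases hyz : |y - z| < δ
    · have hdist : dist ((x, y) : ℝ × ℝ) (x, z) < δ := by
        rw [Prod.dist_eq]
        simp only [dist_self, Real.dist_eq]
        exact max_lt (by linarith) hyz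
      have := hδ' hdist
      rw [Real.dist_eq, abs_sub_lt_iff] at this
      have h2 : (0 : ℝ) ≤ ((n : ℝ) + 1) * |y - z| := by positivity
      linarith [this.1]
    · push_neg at hyz
      have hje : (1 : ℝ) / δ ≤ (n : ℝ) + 1 := by
        calc (1 : ℝ) / δ ≤ (⌈1 / δ⌉₊ : ℝ) := Nat.le_ceil _
          _ ≤ (n : ℝ) := by exact_mod_cast hn
          _ ≤ (n : ℝ) + 1 := by linarith
      have h1 : (1 : ℝ) ≤ ((n : ℝ) + 1) * δ := by
        rw [div_le_iff₀ hδ] at hje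
        linarith
      have h2 : ((n : ℝ) + 1) * δ ≤ ((n : ℝ) + 1) * |y - z| :=
        mul_le_mul_of_nonneg_left hyz (by positivity)
      have h3 := abs_le.mp (hgb (x, z))
      have h4 := abs_le.mp (hgb (x, y))
      linarith [h3.1, h4.2]
  -- Picard-Lindelöf solutions
  have hex : ∀ n : ℕ, ∃ f : ℝ → ℝ, f 0 = 0 ∧
      ∀ t ∈ Icc (0 : ℝ) h, HasDerivWithinAt f (G n t (f t)) (Icc (0 : ℝ) h) t := by
    intro n
    have hlipW : ∀ t : ℝ, LipschitzWith ((n : ℝ≥0) + 1) (fun y => G n t y) := by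
      intro t
      apply LipschitzWith.of_dist_le_mul
      intro y y'
      rw [Real.dist_eq, Real.dist_eq]
      have := hGlipd n t y y'
      have hcoe : (((n : ℝ≥0) + 1 : ℝ≥0) : ℝ) = (n : ℝ) + 1 := by push_cast; ring
      rw [hcoe]
      exact this
    have hpl : IsPicardLindelof (fun t y => G n t y) (tmin := 0) (tmax := h) ⟨0, le_rfl, hh.le⟩
        0 ⟨h, hh.le⟩ 0 (1 / 2) ((n : ℝ≥0) + 1) :=
      { lipschitzOnWith := fun t _ => (hlipW t).lipschitzOnWith
        continuousOn := fun y _ => ((hGcont n).comp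
          (continuous_id.prodMk continuous_const)).continuousOn
        norm_le := fun t _ y _ => by
          rw [Real.norm_eq_abs]
          exact (hGabs n t y).trans (by norm_num)
        mul_max_le := by
          show ((1 / 2 : ℝ≥0) : ℝ) * max (h - 0) (0 - 0) ≤ h - ((0 : ℝ≥0) : ℝ)
          rw [sub_zero, sub_zero, max_eq_left hh.le]
          norm_num
          linarith }
    exact hpl.exists_eq_forall_mem_Icc_hasDerivWithinAt₀
  choose φ hφ0 hφd using hex
  have hφcont : ∀ n, ContinuousOn (φ n) (Icc (0 : ℝ) h) := by
    intro n t ht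
    exact (hφd n t ht).continuousWithinAt
  have hφlip : ∀ n, ∀ x ∈ Icc (0 : ℝ) h, ∀ y ∈ Icc (0 : ℝ) h,
      |φ n y - φ n x| ≤ 1 / 2 * |y - x| := by
    intro n x hx y hy
    have := Convex.norm_image_sub_le_of_norm_hasDerivWithin_le
      (f' := fun t => G n t (φ n t)) (hφd n)
      (fun t _ => by simpa [Real.norm_eq_abs] using hGabs n t (φ n t))
      (convex_Icc _ _) hx hy
    simpa [Real.norm_eq_abs] using this
  have hφbd : ∀ n, ∀ x ∈ Icc (0 : ℝ) h, |φ n x| ≤ x / 2 := by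
    intro n x hx
    have h0 : (0 : ℝ) ∈ Icc (0 : ℝ) h := ⟨le_rfl, hh.le⟩
    have := hφlip n 0 h0 x hx
    rw [hφ0 n] at this
    simp only [sub_zero] at this
    rwa [abs_of_nonneg hx.1, mul_comm, ← div_eq_mul_one_div] at this
  -- monotonicity
  have hmono : ∀ n, ∀ x ∈ Icc (0 : ℝ) h, φ n x ≤ φ (n + 1) x := by
    intro n x hx
    have := nonpos_of_deriv_le_mul (L := (n : ℝ) + 2) (p := 0) (q := h)
      (f := fun t => φ n t - φ (n + 1) t)
      (f' := fun t => G n t (φ n t) - G (n + 1) t (φ (n + 1) t)) hh.le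
      ((hφcont n).sub (hφcont (n + 1)))
      ?_ (by show φ n 0 - φ (n + 1) 0 ≤ 0; rw [hφ0 n, hφ0 (n + 1)]; norm_num) x hx
    · have h' : φ n x - φ (n + 1) x ≤ 0 := this
      linarith
    · intro t ht hft
      have hft' : 0 < φ n t - φ (n + 1) t := hft
      constructor
      · have h1 : HasDerivAt (φ n) (G n t (φ n t)) t :=
          (hφd n t (Ioo_subset_Icc_self ht)).hasDerivAt (Icc_mem_nhds ht.1 ht.2)
        have h2 : HasDerivAt (φ (n + 1)) (G (n + 1) t (φ (n + 1) t)) t :=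
          (hφd (n + 1) t (Ioo_subset_Icc_self ht)).hasDerivAt (Icc_mem_nhds ht.1 ht.2)
        exact h1.sub h2
      · have h1 : G n t (φ n t) ≤ G (n + 1) t (φ n t) := hGmono n t (φ n t)
        have h2 : G (n + 1) t (φ n t) ≤ G (n + 1) t (φ (n + 1) t)
            + (((n + 1 : ℕ) : ℝ) + 1) * |φ n t - φ (n + 1) t| :=
          hGlip1 (n + 1) t (φ n t) (φ (n + 1) t)
        have h3 : |φ n t - φ (n + 1) t| = φ n t - φ (n + 1) t := abs_of_pos hft'
        rw [h3] at h2
        push_cast at h2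
        show G n t (φ n t) - G (n + 1) t (φ (n + 1) t) ≤ ((n : ℝ) + 2) * (φ n t - φ (n + 1) t)
        linarith
  have hmono' : ∀ x ∈ Icc (0 : ℝ) h, Monotone fun n => φ n x := by
    intro x hx
    exact monotone_nat_of_le_succ fun n => hmono n x hx
  have hbddA : ∀ x ∈ Icc (0 : ℝ) h, BddAbove (range fun n => φ n x) := by
    intro x hx
    refine ⟨h, ?_⟩
    rintro _ ⟨n, rfl⟩
    have := (abs_le.mp (hφbd n x hx)).2
    linarith [hx.2, hx.1]
  set φl : ℝ → ℝ := fun x => ⨆ n, φ n x with hφldef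
  have hconv : ∀ x ∈ Icc (0 : ℝ) h, Tendsto (fun n => φ n x) atTop (𝓝 (φl x)) :=
    fun x hx => tendsto_atTop_ciSup (hmono' x hx) (hbddA x hx)
  have hφllip : ∀ x ∈ Icc (0 : ℝ) h, ∀ y ∈ Icc (0 : ℝ) h,
      |φl y - φl x| ≤ 1 / 2 * |y - x| := by
    intro x hx y hy
    have ht : Tendsto (fun n => |φ n y - φ n x|) atTop (𝓝 |φl y - φl x|) :=
      ((hconv y hy).sub (hconv x hx)).abs
    exact le_of_tendsto ht (Eventually.of_forall fun n => hφlip n x hx y hy)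
  have hφlbd : ∀ x ∈ Icc (0 : ℝ) h, |φl x| ≤ x / 2 := by
    intro x hx
    have ht : Tendsto (fun n => |φ n x|) atTop (𝓝 |φl x|) := (hconv x hx).abs
    exact le_of_tendsto ht (Eventually.of_forall fun n => hφbd n x hx)
  have hφlcont : ContinuousOn φl (Icc (0 : ℝ) h) := by
    rw [Metric.continuousOn_iff]
    intro x hx ε hε
    refine ⟨ε, hε, fun y hy hxy => ?_⟩
    rw [Real.dist_eq] at hxy ⊢
    have := hφllip x hx y hy
    have habs : |y - x| < ε := hxy
    linarith
  -- integral equation for each n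
  have hGinteg : ∀ (n : ℕ) (x : ℝ), x ∈ Icc (0 : ℝ) h →
      ContinuousOn (fun t => G n t (φ n t)) (Icc (0 : ℝ) x) := by
    intro n x hx
    exact (hGcont n).comp_continuousOn
      (continuousOn_id.prodMk ((hφcont n).mono (Icc_subset_Icc le_rfl hx.2)))
  have hint : ∀ (n : ℕ), ∀ x ∈ Icc (0 : ℝ) h,
      φ n x = ∫ t in (0 : ℝ)..x, G n t (φ n t) := by
    intro n x hx
    have := intervalIntegral.integral_eq_sub_of_hasDeriv_right_of_le hx.1
      ((hφcont n).mono (Icc_subset_Icc le_rfl hx.2))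
      (fun t ht => ?_)
      (((hGinteg n x hx).mono (by rw [uIcc_of_le hx.1])).intervalIntegrable)
    · rw [hφ0 n, sub_zero] at this
      exact this.symm
    · have htIoo : t ∈ Ioo (0 : ℝ) h := ⟨ht.1, lt_of_lt_of_le ht.2 hx.2⟩
      exact ((hφd n t (Ioo_subset_Icc_self htIoo)).hasDerivAt
        (Icc_mem_nhds htIoo.1 htIoo.2)).hasDerivWithinAt
  -- passage to the limit
  have hle : ∀ x ∈ Icc (0 : ℝ) h, φl x = ∫ t in (0 : ℝ)..x, g (t, φl t) := by
    intro x hx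
    have hIsub : Set.uIoc (0 : ℝ) x ⊆ Icc (0 : ℝ) h := by
      rw [uIoc_of_le hx.1]
      exact (Ioc_subset_Icc_self).trans (Icc_subset_Icc le_rfl hx.2)
    have htend : Tendsto (fun n => ∫ t in (0 : ℝ)..x, G n t (φ n t)) atTop
        (𝓝 (∫ t in (0 : ℝ)..x, g (t, φl t))) := by
      apply intervalIntegral.tendsto_integral_filter_of_dominated_convergence
        (bound := fun _ => 1 / 2)
      · exact Eventually.of_forall fun n =>
          ((hGinteg n x hx).mono (by rw [uIoc_of_le hx.1]; exact Ioc_subset_Icc_self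
            )).aestronglyMeasurable measurableSet_uIoc
      · exact Eventually.of_forall fun n => ae_of_all _ fun t _ => by
          simpa [Real.norm_eq_abs] using hGabs n t (φ n t)
      · exact intervalIntegrable_const
      · refine ae_of_all _ fun t ht => ?_
        have htIcc : t ∈ Icc (0 : ℝ) h := hIsub ht
        rw [Metric.tendsto_atTop]
        intro ε hε
        obtain ⟨N₁, hN₁⟩ := hGunif (ε / 2) (by linarith)
        have htc : Tendsto (fun n => g (t, φ n t)) atTop (𝓝 (g (t, φl t))) :=
          (hgc.continuousAt.tendsto).comp
            (tendsto_const_nhds.prodMk_nhds (hconv t htIcc))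
        obtain ⟨N₂, hN₂⟩ := Metric.tendsto_atTop.mp htc (ε / 2) (by linarith)
        refine ⟨max N₁ N₂, fun n hn => ?_⟩
        have hn₁ : n ≥ N₁ := le_trans (le_max_left _ _) hn
        have hn₂ : n ≥ N₂ := le_trans (le_max_right _ _) hn
        have h1 : g (t, φ n t) - ε / 2 ≤ G n t (φ n t) := hN₁ n hn₁ t (φ n t)
        have h2 : G n t (φ n t) ≤ g (t, φ n t) := hGle n t (φ n t)
        have h3 := hN₂ n hn₂
        rw [Real.dist_eq] at h3 ⊢
        have h3' := abs_sub_lt_iff.mp h3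
        rw [abs_sub_lt_iff]
        exact ⟨by linarith [h3'.1], by linarith [h3'.2]⟩
    have htend2 : Tendsto (fun n => ∫ t in (0 : ℝ)..x, G n t (φ n t)) atTop (𝓝 (φl x)) := by
      have : (fun n => ∫ t in (0 : ℝ)..x, G n t (φ n t)) = fun n => φ n x := by
        funext n; exact (hint n x hx).symm
      rw [this]
      exact hconv x hx
    exact tendsto_nhds_unique htend2 htend
  -- final solution
  set π : ℝ → ℝ := fun t => max 0 (min t h) with hπdef
  have hπmem : ∀ t, π t ∈ Icc (0 : ℝ) h := fun t =>
    ⟨le_max_left _ _, max_le hh.le (min_le_right _ _)⟩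
  have hπid : ∀ t ∈ Icc (0 : ℝ) h, π t = t := by
    intro t ht
    simp only [hπdef]
    rw [min_eq_left ht.2, max_eq_right ht.1]
  have hπcont : Continuous π := continuous_const.max (continuous_id.min continuous_const)
  set φc : ℝ → ℝ := fun t => φl (π t) with hφcdef
  have hφccont : Continuous φc := hφlcont.comp_continuous hπcont hπmem
  set u : ℝ → ℝ := fun t => g (t, φc t) with hudef
  have hucont : Continuous u := hgc.comp (continuous_id.prodMk hφccont)
  set Ψ : ℝ → ℝ := fun y => ∫ t in (0 : ℝ)..y, u t with hΨdef
  have hΨeq : ∀ x ∈ Icc (0 : ℝ) h, Ψ x = φl x := by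
    intro x hx
    have hcongr : EqOn u (fun t => g (t, φl t)) (uIcc (0 : ℝ) x) := by
      intro t ht
      rw [uIcc_of_le hx.1] at ht
      have htIcc : t ∈ Icc (0 : ℝ) h := Icc_subset_Icc le_rfl hx.2 ht
      simp only [hudef, hφcdef]
      rw [hπid t htIcc]
    simp only [hΨdef]
    rw [intervalIntegral.integral_congr hcongr, ← hle x hx]
  have hΨd : ∀ x : ℝ, HasDerivAt Ψ (u x) x := fun x =>
    intervalIntegral.integral_hasDerivAt_right (hucont.intervalIntegrable _ _)
      (hucont.stronglyMeasurableAtFilter _ _) hucont.continuousAt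
  refine ⟨Ψ, ?_, ?_, ?_⟩
  · simp [hΨdef]
  · intro x hx
    rw [hΨeq x hx]
    exact hφlbd x hx
  · intro x hx
    have : g (x, Ψ x) = u x := by
      simp only [hudef, hφcdef]
      rw [hπid x hx, hΨeq x hx]
    rw [this]
    exact (hΨd x).hasDerivWithinAt

set_option maxHeartbeats 1000000 in
/-- Theorem 1, case U⁺₁,₌. -/
theorem theorem1_case_U1_eq
    (G Ghat : Set (ℝ × ℝ)) (hGopen : IsOpen G) (hGhat : Ghat ⊆ frontier G)
    (f₀ : ℝ × ℝ → ℝ) (hf : ContinuousOn f₀ (G ∪ Ghat))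
    (hO : ((0 : ℝ), (0 : ℝ)) ∈ Ghat) (hf0 : f₀ (0, 0) = 0)
    (a : ℝ) (ha : 0 < a)
    (b b' : ℝ → ℝ)
    (hderiv : ∀ x ∈ Icc (0 : ℝ) a, HasDerivWithinAt b (b' x) (Icc (0 : ℝ) a) x)
    (hb'cont : ContinuousOn b' (Icc (0 : ℝ) a))
    (hb0 : b 0 = 0) (hb'0 : b' 0 = 0)
    (hconv : ConvexOn ℝ (Icc (0 : ℝ) a) b)
    (hcurve : ∀ x ∈ Ioc (0 : ℝ) a, (x, b x) ∈ Ghat)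
    (hbc : ∀ x ∈ Ioc (0 : ℝ) a, f₀ (x, b x) ≤ b' x)
    (c : ℝ) (hc : c ∈ Ioc (0 : ℝ) a)
    (hin : ∀ x y : ℝ, 0 < x → x ≤ c → -c ≤ y → y < b x → (x, y) ∈ G) :
    ∃ h ∈ Ioc (0 : ℝ) c, ∃ φ : ℝ → ℝ, φ 0 = 0 ∧
      ∀ x ∈ Icc (0 : ℝ) h, (x, φ x) ∈ G ∪ Ghat ∧
        HasDerivWithinAt φ (f₀ (x, φ x)) (Icc (0 : ℝ) h) x := by
  have hbcont : ContinuousOn b (Icc (0 : ℝ) a) :=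
    fun x hx => (hderiv x hx).continuousWithinAt
  -- choose δ₁ from continuity of b' at 0
  obtain ⟨δ₁, hδ₁, hδ₁'⟩ :=
    Metric.continuousWithinAt_iff.mp (hb'cont 0 ⟨le_rfl, ha.le⟩) (1 / 2) (by norm_num)
  -- choose δ₂ from continuity of f₀ at (0,0)
  obtain ⟨δ₂, hδ₂, hδ₂'⟩ :=
    Metric.continuousWithinAt_iff.mp (hf (0, 0) (Or.inr hO)) (1 / 2) (by norm_num)
  -- choose h
  set h : ℝ := min 1 (min (2 * c / 3) (min a (min (δ₁ / 2) (δ₂ / 2)))) with hhdef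
  have hc0 : 0 < c := hc.1
  have hh : 0 < h := by
    apply lt_min one_pos
    apply lt_min (by linarith)
    exact lt_min ha (lt_min (by linarith) (by linarith))
  have hh1 : h ≤ 1 := min_le_left _ _
  have hhc : h ≤ 2 * c / 3 := (min_le_right _ _).trans (min_le_left _ _)
  have hha : h ≤ a := (min_le_right _ _).trans ((min_le_right _ _).trans (min_le_left _ _))
  have hhδ₁ : h ≤ δ₁ / 2 := (min_le_right _ _).trans ((min_le_right _ _).trans
    ((min_le_right _ _).trans (min_le_left _ _)))
  have hhδ₂ : h ≤ δ₂ / 2 := (min_le_right _ _).trans ((min_le_right _ _).trans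
    ((min_le_right _ _).trans (min_le_right _ _)))
  have hhc' : h ≤ c := hhc.trans (by linarith)
  have hIccsub : Icc (0 : ℝ) h ⊆ Icc (0 : ℝ) a := Icc_subset_Icc le_rfl hha
  -- |b'| ≤ 1/2 on [0,h]
  have hb'le : ∀ x ∈ Icc (0 : ℝ) h, |b' x| ≤ 1 / 2 := by
    intro x hx
    have hxa : x ∈ Icc (0 : ℝ) a := hIccsub hx
    have hdist : dist x 0 < δ₁ := by
      rw [Real.dist_eq, sub_zero, abs_of_nonneg hx.1]
      linarith [hx.2]
    have := hδ₁' hxa hdist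
    rw [hb'0, Real.dist_eq, sub_zero] at this
    exact this.le
  -- |b x| ≤ x/2 on [0,h]
  have hble : ∀ x ∈ Icc (0 : ℝ) h, |b x| ≤ x / 2 := by
    intro x hx
    have := Convex.norm_image_sub_le_of_norm_hasDerivWithin_le (f' := b')
      (fun t ht => (hderiv t (hIccsub ht)).mono hIccsub)
      (fun t ht => by simpa [Real.norm_eq_abs] using hb'le t ht)
      (convex_Icc _ _) (left_mem_Icc.mpr hh.le) hx
    rw [hb0, sub_zero, sub_zero, Real.norm_eq_abs, Real.norm_eq_abs,
      abs_of_nonneg hx.1] at this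
    linarith
  -- the truncation maps
  set π : ℝ → ℝ := fun t => max 0 (min t h) with hπdef
  have hπmem : ∀ t, π t ∈ Icc (0 : ℝ) h := fun t =>
    ⟨le_max_left _ _, max_le hh.le (min_le_right _ _)⟩
  have hπid : ∀ t ∈ Icc (0 : ℝ) h, π t = t := by
    intro t ht
    simp only [hπdef]
    rw [min_eq_left ht.2, max_eq_right ht.1]
  have hπcont : Continuous π := continuous_const.max (continuous_id.min continuous_const)
  have hπlip : ∀ s t, |π s - π t| ≤ |s - t| := by
    intro s t
    have h1 : |max 0 (min s h) - max 0 (min t h)| ≤ |min s h - min t h| := by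
      rw [max_comm 0 (min s h), max_comm 0 (min t h)]
      exact abs_max_sub_max_le_abs _ _ _
    have h2 : |min s h - min t h| ≤ |s - t| := by
      have := abs_min_sub_min_le_max s h t h
      simpa using this
    exact h1.trans h2
  set σ : ℝ × ℝ → ℝ :=
    fun p => max (b (π p.1) - π p.1) (min p.2 (b (π p.1))) with hσdef
  set ρ : ℝ × ℝ → ℝ × ℝ := fun p => (π p.1, σ p) with hρdef
  have hlohi : ∀ t : ℝ, b (π t) - π t ≤ b (π t) := fun t => by
    linarith [(hπmem t).1]
  have hσmem : ∀ p : ℝ × ℝ, σ p ∈ Icc (b (π p.1) - π p.1) (b (π p.1)) := by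
    intro p
    constructor
    · exact le_max_left _ _
    · exact max_le (hlohi p.1) (min_le_right _ _)
  -- strip membership
  have hmem : ∀ x ∈ Icc (0 : ℝ) h, ∀ y : ℝ, b x - x ≤ y → y ≤ b x →
      ((x, y) ∈ G ∪ Ghat ∧ dist ((x, y) : ℝ × ℝ) ((0 : ℝ), (0 : ℝ)) < δ₂) := by
    intro x hx y hy1 hy2
    have hbx := hble x hx
    have hbx1 := (abs_le.mp hbx).1
    have hbx2 := (abs_le.mp hbx).2
    have hyabs : |y| ≤ 3 * x / 2 := by
      rw [abs_le]
      constructor <;> linarith [hx.1]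
    have hdist : dist ((x, y) : ℝ × ℝ) ((0 : ℝ), (0 : ℝ)) < δ₂ := by
      rw [Prod.dist_eq]
      apply max_lt
      · rw [Real.dist_eq, sub_zero, abs_of_nonneg hx.1]
        linarith [hx.2]
      · rw [Real.dist_eq, sub_zero]
        have : 3 * x / 2 ≤ 3 * h / 2 := by linarith [hx.2]
        linarith
    refine ⟨?_, hdist⟩
    rcases eq_or_lt_of_le hx.1 with hx0 | hx0
    · have hb0' : b x = 0 := by rw [← hx0]; exact hb0
      have : y = 0 := by rw [hb0'] at hy1 hy2; rw [← hx0] at hy1; linarith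
      rw [← hx0, this]
      exact Or.inr hO
    · rcases eq_or_lt_of_le hy2 with hyb | hyb
      · rw [hyb]
        exact Or.inr (hcurve x ⟨hx0, hx.2.trans hha⟩)
      · refine Or.inl (hin x y hx0 (hx.2.trans hhc') ?_ hyb)
        have : -(3 * x / 2) ≤ y := (abs_le.mp hyabs).1
        have hxc : 3 * x / 2 ≤ c := by
          have := hx.2
          nlinarith
        linarith
  -- the modified field
  set g : ℝ × ℝ → ℝ := fun p => f₀ (ρ p) with hgdef
  have hρmem : ∀ p : ℝ × ℝ, (ρ p ∈ G ∪ Ghat) ∧ dist (ρ p) ((0 : ℝ), (0 : ℝ)) < δ₂ := by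
    intro p
    exact hmem (π p.1) (hπmem p.1) (σ p) (hσmem p).1 (hσmem p).2
  have hgbd : ∀ p, |g p| ≤ 1 / 2 := by
    intro p
    have := hδ₂' (hρmem p).1 (hρmem p).2
    rw [hf0, Real.dist_eq, sub_zero] at this
    exact this.le
  -- identity on the strip
  have hgf : ∀ x ∈ Icc (0 : ℝ) h, ∀ y : ℝ, b x - x ≤ y → y ≤ b x →
      g (x, y) = f₀ (x, y) := by
    intro x hx y hy1 hy2
    have hπx : π x = x := hπid x hx
    have hσxy : σ (x, y) = y := by
      simp only [hσdef, hπx]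
      rw [min_eq_left hy2, max_eq_right hy1]
    simp only [hgdef, hρdef, hπx, hσxy]
  -- continuity of g
  have hbπcont : Continuous (fun t => b (π t)) :=
    (hbcont.mono hIccsub).comp_continuous hπcont hπmem
  have hσcont : Continuous σ := by
    apply Continuous.max
    · exact (hbπcont.comp continuous_fst).sub (hπcont.comp continuous_fst)
    · exact continuous_snd.min (hbπcont.comp continuous_fst)
  have hρcont : Continuous ρ := (hπcont.comp continuous_fst).prodMk hσcont
  have hgc : Continuous g :=
    (hf.mono fun p hp => hp).comp_continuous hρcont fun p => (hρmem p).1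
  -- uniform continuity of g
  have hρidem : ∀ p : ℝ × ℝ, ρ (ρ p) = ρ p := by
    intro p
    have h1 : π (π p.1) = π p.1 := hπid _ (hπmem p.1)
    have h2 : σ (ρ p) = σ p := by
      simp only [hσdef, hρdef, h1]
      rw [min_eq_left (hσmem p).2, max_eq_right (hσmem p).1]
    simp only [hρdef] at h2 ⊢
    rw [h1, h2]
  set B : Set (ℝ × ℝ) := Icc (0 : ℝ) h ×ˢ Icc (-(2 * h)) h with hBdef
  have hBcomp : IsCompact B := isCompact_Icc.prod isCompact_Icc
  set K : Set (ℝ × ℝ) := ρ '' B with hKdef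
  have hKcomp : IsCompact K := hBcomp.image hρcont
  have hρB : ∀ p : ℝ × ℝ, ρ p ∈ B := by
    intro p
    refine ⟨hπmem p.1, ?_, ?_⟩
    · have h1 := (hσmem p).1
      have h2 := (abs_le.mp (hble _ (hπmem p.1))).1
      have h3 := (hπmem p.1).2
      simp only [hρdef]
      have h4 := (hπmem p.1).1
      nlinarith
    · have h2 := (abs_le.mp (hble _ (hπmem p.1))).2
      have h3 := (hπmem p.1).2
      have := (hσmem p).2
      simp only [hρdef]
      linarith
  have hρK : ∀ p : ℝ × ℝ, ρ p ∈ K := fun p => ⟨ρ p, hρB p, hρidem p⟩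
  have hKsub : K ⊆ G ∪ Ghat := by
    rintro _ ⟨q, _, rfl⟩
    exact (hρmem q).1
  have hf₀K : UniformContinuousOn f₀ K :=
    hKcomp.uniformContinuousOn_of_continuous (hf.mono hKsub)
  have hgu : UniformContinuous g := by
    rw [Metric.uniformContinuous_iff]
    intro ε hε
    obtain ⟨δK, hδK, hδK'⟩ := Metric.uniformContinuousOn_iff.mp hf₀K ε hε
    -- uniform continuity of b ∘ π
    have hbπu : ∀ ε' > (0 : ℝ), ∃ δ' > (0 : ℝ), ∀ s t : ℝ, |s - t| < δ' →
        |b (π s) - b (π t)| < ε' := by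
      intro ε' hε'
      obtain ⟨δ', hδ', hδ''⟩ := Metric.uniformContinuousOn_iff.mp
        (isCompact_Icc.uniformContinuousOn_of_continuous (hbcont.mono hIccsub)) ε' hε'
      refine ⟨δ', hδ', fun s t hst => ?_⟩
      have : dist (π s) (π t) < δ' := by
        rw [Real.dist_eq]
        exact lt_of_le_of_lt (hπlip s t) hst
      have := hδ'' (π s) (hπmem s) (π t) (hπmem t) this
      rwa [Real.dist_eq] at this
    obtain ⟨δ', hδ', hδ''⟩ := hbπu (δK / 4) (by linarith)
    refine ⟨min δ' (δK / 4), lt_min hδ' (by linarith), ?_⟩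
    intro p q hpq
    rw [Prod.dist_eq, max_lt_iff] at hpq
    have hpq1 : |p.1 - q.1| < min δ' (δK / 4) := by
      rw [← Real.dist_eq]; exact hpq.1
    have hpq2 : |p.2 - q.2| < min δ' (δK / 4) := by
      rw [← Real.dist_eq]; exact hpq.2
    have hπd : |π p.1 - π q.1| < δK / 4 :=
      lt_of_le_of_lt (hπlip p.1 q.1) (lt_of_lt_of_le hpq1 (min_le_right _ _))
    have hbd : |b (π p.1) - b (π q.1)| < δK / 4 :=
      hδ'' p.1 q.1 (lt_of_lt_of_le hpq1 (min_le_left _ _))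
    have hσd : |σ p - σ q| < δK := by
      have h1 : |σ p - σ q| ≤
          max (|(b (π p.1) - π p.1) - (b (π q.1) - π q.1)|)
            (|min p.2 (b (π p.1)) - min q.2 (b (π q.1))|) := by
        simp only [hσdef]
        exact abs_max_sub_max_le_max _ _ _ _
      have h2 : |(b (π p.1) - π p.1) - (b (π q.1) - π q.1)| < δK / 2 := by
        have := abs_sub (b (π p.1) - b (π q.1)) (π p.1 - π q.1)
        calc |(b (π p.1) - π p.1) - (b (π q.1) - π q.1)|
            = |(b (π p.1) - b (π q.1)) - (π p.1 - π q.1)| := by ring_nf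
          _ ≤ |b (π p.1) - b (π q.1)| + |π p.1 - π q.1| := abs_sub _ _
          _ < δK / 2 := by linarith
      have h3 : |min p.2 (b (π p.1)) - min q.2 (b (π q.1))| < δK / 2 := by
        have := abs_min_sub_min_le_max p.2 (b (π p.1)) q.2 (b (π q.1))
        have h4 : |p.2 - q.2| < δK / 2 :=
          lt_of_lt_of_le hpq2 ((min_le_right _ _).trans (by linarith))
        have h5 : |b (π p.1) - b (π q.1)| < δK / 2 := by linarith
        exact lt_of_le_of_lt this (max_lt h4 h5)
      exact lt_of_le_of_lt h1 (max_lt (by linarith) (by linarith))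
    have hρd : dist (ρ p) (ρ q) < δK := by
      rw [Prod.dist_eq]
      apply max_lt
      · rw [Real.dist_eq]
        simp only [hρdef]
        calc |π p.1 - π q.1| < δK / 4 := hπd
          _ < δK := by linarith
      · rw [Real.dist_eq]
        exact hσd
    exact hδK' (ρ p) (hρK p) (ρ q) (hρK q) hρd
  -- apply Peano
  obtain ⟨Ψ, hΨ0, hΨbd, hΨd⟩ := peano_ex hgc hgu hgbd hh
  have hΨcont : ContinuousOn Ψ (Icc (0 : ℝ) h) :=
    fun t ht => (hΨd t ht).continuousWithinAt
  -- upper barrier: Ψ ≤ b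
  have hup : ∀ x ∈ Icc (0 : ℝ) h, Ψ x ≤ b x := by
    intro x hx
    have := nonpos_of_deriv_le_mul (L := 0) (p := 0) (q := h)
      (f := fun t => Ψ t - b t) (f' := fun t => g (t, Ψ t) - b' t) hh.le
      (hΨcont.sub (hbcont.mono hIccsub))
      ?_
      (by show Ψ 0 - b 0 ≤ 0; rw [hΨ0, hb0]; norm_num) x hx
    · have h' : Ψ x - b x ≤ 0 := this
      linarith
    · intro t ht hft
      have hft' : 0 < Ψ t - b t := hft
      have htIcc : t ∈ Icc (0 : ℝ) h := Ioo_subset_Icc_self ht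
      constructor
      · have h1 : HasDerivAt Ψ (g (t, Ψ t)) t :=
          (hΨd t htIcc).hasDerivAt (Icc_mem_nhds ht.1 ht.2)
        have h2 : HasDerivAt b (b' t) t :=
          (hderiv t (hIccsub htIcc)).hasDerivAt
            (Icc_mem_nhds ht.1 (lt_of_lt_of_le ht.2 hha))
        exact h1.sub h2
      · have hπt : π t = t := hπid t htIcc
        have hσt : σ (t, Ψ t) = b t := by
          simp only [hσdef, hπt]
          rw [min_eq_right (by linarith : b t ≤ Ψ t),
            max_eq_right (by linarith [ht.1] : b t - t ≤ b t)]
        have hgeq : g (t, Ψ t) = f₀ (t, b t) := by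
          simp only [hgdef, hρdef, hπt, hσt]
        have hineq : f₀ (t, b t) ≤ b' t :=
          hbc t ⟨ht.1, (lt_of_lt_of_le ht.2 hha).le⟩
        show g (t, Ψ t) - b' t ≤ 0 * (Ψ t - b t)
        rw [hgeq, zero_mul]
        linarith
  -- lower bound: b x - x ≤ Ψ x
  have hlow : ∀ x ∈ Icc (0 : ℝ) h, b x - x ≤ Ψ x := by
    intro x hx
    have h1 := (abs_le.mp (hΨbd x hx)).1
    have h2 := (abs_le.mp (hble x hx)).2
    linarith
  -- conclusion
  refine ⟨h, ⟨hh, hhc'⟩, Ψ, hΨ0, fun x hx => ?_⟩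
  constructor
  · exact (hmem x hx (Ψ x) (hlow x hx) (hup x hx)).1
  · have := hΨd x hx
    rwa [hgf x hx (Ψ x) (hlow x hx) (hup x hx)] at this
end

section
/- Theorem 1, case O⁺₁,<: Assume there exist a > 0, τ > 0 and a continuously differentiable function b : [0,a] → ℝ with b(0) = 0 and b'(x) ≤ −τ for all x ∈ [0,a], such that (x, b(x)) ∈ Ĝ for every x ∈ (0,a], and there exists c ∈ (0,a] such that every point (x,y) with 0 < x ≤ c and b(x) < y ≤ c belongs to G. Then there exist h ∈ (0,c] and a function φ : [0,h] → ℝ with φ(0) = 0 which is a solution of y' = f₀(x,y) with graph in G̃ on [0,h]. -/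
open Set

open Metric Filter Topology intervalIntegral
open scoped NNReal

section Aux
open Metric Filter Topology

private lemma infConv_bddBelow {F : ℝ × ℝ → ℝ} {M : ℝ} (hFb : ∀ q, |F q| ≤ M) (k : ℝ)
    (hk : 0 ≤ k) (p : ℝ × ℝ) : BddBelow (Set.range fun q => F q + k * dist p q) := by
  refine ⟨-M, ?_⟩
  rintro - ⟨q, rfl⟩
  have h1 := (abs_le.1 (hFb q)).1
  have h2 : 0 ≤ k * dist p q := mul_nonneg hk dist_nonneg
  simp only
  linarith

private lemma infConv_le {F : ℝ × ℝ → ℝ} {M : ℝ} (hFb : ∀ q, |F q| ≤ M) (k : ℝ) (hk : 0 ≤ k)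
    (p : ℝ × ℝ) : (⨅ q : ℝ × ℝ, (F q + k * dist p q)) ≤ F p := by
  have := ciInf_le (infConv_bddBelow hFb k hk p) p
  simpa using this

private lemma infConv_ge {F : ℝ × ℝ → ℝ} {M : ℝ} (hFb : ∀ q, |F q| ≤ M) (k : ℝ) (hk : 0 ≤ k)
    (p : ℝ × ℝ) : -M ≤ (⨅ q : ℝ × ℝ, (F q + k * dist p q)) := by
  refine le_ciInf fun q => ?_
  have h1 := (abs_le.1 (hFb q)).1
  have h2 : 0 ≤ k * dist p q := mul_nonneg hk dist_nonneg
  linarith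

private lemma infConv_lip {F : ℝ × ℝ → ℝ} {M : ℝ} (hFb : ∀ q, |F q| ≤ M) (k : ℝ) (hk : 0 ≤ k)
    (p p' : ℝ × ℝ) :
    (⨅ q : ℝ × ℝ, (F q + k * dist p q)) ≤ (⨅ q : ℝ × ℝ, (F q + k * dist p' q)) + k * dist p p' := by
  rw [← sub_le_iff_le_add]
  refine le_ciInf fun q => ?_
  rw [sub_le_iff_le_add]
  calc (⨅ q : ℝ × ℝ, (F q + k * dist p q)) ≤ F q + k * dist p q :=
        ciInf_le (infConv_bddBelow hFb k hk p) q
    _ ≤ F q + k * dist p' q + k * dist p p' := by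
        have : dist p q ≤ dist p p' + dist p' q := dist_triangle _ _ _
        nlinarith

/-- Uniform convergence of inf-convolutions to a uniformly continuous bounded function. -/
private lemma infConv_conv {F : ℝ × ℝ → ℝ} {M : ℝ} (hFb : ∀ q, |F q| ≤ M)
    (hF : UniformContinuous F) {σ : ℝ} (hσ : 0 < σ) :
    ∃ K : ℕ, ∀ k : ℕ, K ≤ k → ∀ p, F p - (⨅ q : ℝ × ℝ, (F q + (k : ℝ) * dist p q)) ≤ σ := by
  obtain ⟨δ, hδ0, hδ⟩ := Metric.uniformContinuous_iff.1 hF σ hσ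
  obtain ⟨K, hK⟩ := exists_nat_ge (2 * M / δ)
  refine ⟨K, fun k hk p => ?_⟩
  have hkK : (2 * M / δ) ≤ (k : ℝ) := hK.trans (by exact_mod_cast hk)
  rw [sub_le_comm]
  refine le_ciInf fun q => ?_
  rcases le_or_gt δ (dist p q) with hd | hd
  · have h1 := (abs_le.1 (hFb q)).1
    have h2 := (abs_le.1 (hFb p)).2
    have h3 : 2 * M ≤ (k : ℝ) * dist p q := by
      have : 2 * M / δ * δ ≤ (k : ℝ) * dist p q := by
        apply mul_le_mul hkK hd (le_of_lt hδ0) (by positivity)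
      rwa [div_mul_cancel₀] at this
      exact ne_of_gt hδ0
    linarith
  · have := hδ (show dist q p < δ by rwa [dist_comm])
    rw [Real.dist_eq, abs_lt] at this
    have h2 : 0 ≤ (k : ℝ) * dist p q := by positivity
    linarith [this.2]

end Aux

set_option maxHeartbeats 2000000 in
/-- Theorem 1, case O⁺₁,<. -/
theorem theorem1_case_O1_lt
    (G Ghat : Set (ℝ × ℝ)) (hGopen : IsOpen G) (hGhat : Ghat ⊆ frontier G)
    (f₀ : ℝ × ℝ → ℝ) (hf : ContinuousOn f₀ (G ∪ Ghat))
    (hO : ((0 : ℝ), (0 : ℝ)) ∈ Ghat) (hf0 : f₀ (0, 0) = 0)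
    (a τ : ℝ) (ha : 0 < a) (hτ : 0 < τ)
    (b b' : ℝ → ℝ)
    (hderiv : ∀ x ∈ Icc (0 : ℝ) a, HasDerivWithinAt b (b' x) (Icc (0 : ℝ) a) x)
    (hb'cont : ContinuousOn b' (Icc (0 : ℝ) a))
    (hb0 : b 0 = 0)
    (hb'τ : ∀ x ∈ Icc (0 : ℝ) a, b' x ≤ -τ)
    (hcurve : ∀ x ∈ Ioc (0 : ℝ) a, (x, b x) ∈ Ghat)
    (c : ℝ) (hc : c ∈ Ioc (0 : ℝ) a)
    (hin : ∀ x y : ℝ, 0 < x → x ≤ c → b x < y → y ≤ c → (x, y) ∈ G) :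
    ∃ h ∈ Ioc (0 : ℝ) c, ∃ φ : ℝ → ℝ, φ 0 = 0 ∧
      ∀ x ∈ Icc (0 : ℝ) h, (x, φ x) ∈ G ∪ Ghat ∧
        HasDerivWithinAt φ (f₀ (x, φ x)) (Icc (0 : ℝ) h) x := by
  obtain ⟨hc0, hca⟩ := hc
  set ε : ℝ := τ / 2 with hεdef
  have hε0 : 0 < ε := by positivity
  have hετ : ε < τ := by rw [hεdef]; linarith
  -- continuity at the origin
  have hcw : ContinuousWithinAt f₀ (G ∪ Ghat) (0, 0) := hf _ (Or.inr hO)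
  rw [Metric.continuousWithinAt_iff] at hcw
  obtain ⟨δ, hδ0, hδ⟩ := hcw ε hε0
  -- choice of h
  have h1ε : (0 : ℝ) < 1 + ε := by linarith
  set h : ℝ := min c (δ / 2) / (1 + ε) with hhdef
  have hm0 : 0 < min c (δ / 2) := lt_min hc0 (by linarith)
  have hh0 : 0 < h := div_pos hm0 h1ε
  have hhm : h ≤ min c (δ / 2) := by
    rw [hhdef, div_le_iff₀ h1ε]; nlinarith
  have hεhm : ε * h ≤ min c (δ / 2) := by
    rw [hhdef]
    rw [← mul_div_assoc, div_le_iff₀ h1ε]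
    nlinarith
  have hhc : h ≤ c := hhm.trans (min_le_left _ _)
  have hhδ : h ≤ δ / 2 := hhm.trans (min_le_right _ _)
  have hεhc : ε * h ≤ c := hεhm.trans (min_le_left _ _)
  have hεhδ : ε * h ≤ δ / 2 := hεhm.trans (min_le_right _ _)
  -- b is below -τ x
  have hbneg : ∀ x ∈ Icc (0 : ℝ) a, b x ≤ -τ * x := by
    intro x hx
    have hconv : Convex ℝ (Icc (0 : ℝ) a) := convex_Icc _ _
    have hbc : ContinuousOn b (Icc (0 : ℝ) a) := fun y hy => (hderiv y hy).continuousWithinAt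
    have hdiff : DifferentiableOn ℝ b (interior (Icc (0 : ℝ) a)) := by
      intro y hy
      rw [interior_Icc] at hy
      exact ((hderiv y (Ioo_subset_Icc_self hy)).hasDerivAt
        (Icc_mem_nhds hy.1 hy.2)).differentiableAt.differentiableWithinAt
    have hder : ∀ y ∈ interior (Icc (0 : ℝ) a), deriv b y ≤ -τ := by
      intro y hy
      rw [interior_Icc] at hy
      have := ((hderiv y (Ioo_subset_Icc_self hy)).hasDerivAt (Icc_mem_nhds hy.1 hy.2)).deriv
      rw [this]
      exact hb'τ y (Ioo_subset_Icc_self hy)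
    have := hconv.image_sub_le_mul_sub_of_deriv_le hbc hdiff hder 0
      (left_mem_Icc.2 ha.le) x hx hx.1
    rw [hb0] at this
    linarith
  -- the wedge
  set W : Set (ℝ × ℝ) := {p | 0 ≤ p.1 ∧ p.1 ≤ h ∧ |p.2| ≤ ε * p.1} with hWdef
  have hWclosed : IsClosed W := by
    have h1 : IsClosed {p : ℝ × ℝ | 0 ≤ p.1} := isClosed_le continuous_const continuous_fst
    have h2 : IsClosed {p : ℝ × ℝ | p.1 ≤ h} := isClosed_le continuous_fst continuous_const
    have h3 : IsClosed {p : ℝ × ℝ | |p.2| ≤ ε * p.1} :=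
      isClosed_le (continuous_snd.abs) (continuous_const.mul continuous_fst)
    have : W = {p : ℝ × ℝ | 0 ≤ p.1} ∩ ({p | p.1 ≤ h} ∩ {p | |p.2| ≤ ε * p.1}) := by
      ext p; simp [hWdef, and_assoc]
    rw [this]
    exact h1.inter (h2.inter h3)
  have hWsub : W ⊆ G ∪ Ghat := by
    rintro ⟨x, y⟩ ⟨hx0, hxh, hy⟩
    simp only at hx0 hxh hy
    rcases eq_or_lt_of_le hx0 with hx0' | hx0'
    · have hy0 : y = 0 := by
        have : |y| ≤ 0 := by rw [← hx0'] at hy; simpa using hy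
        simpa using (abs_nonpos_iff.1 this)
      right
      rw [← hx0', hy0]
      exact hO
    · left
      have hxc : x ≤ c := hxh.trans hhc
      refine hin x y hx0' hxc ?_ ?_
      · have h1 : b x ≤ -τ * x := hbneg x ⟨hx0, hxc.trans hca⟩
        have h2 : -(ε * x) ≤ y := (abs_le.1 hy).1
        nlinarith
      · have := (abs_le.1 hy).2
        have : y ≤ ε * h := this.trans (by nlinarith)
        linarith [hεhc]
  have hWsmall : ∀ p ∈ W, |f₀ p| ≤ ε := by
    rintro ⟨x, y⟩ hp
    obtain ⟨hx0, hxh, hy⟩ := hp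
    simp only at hx0 hxh hy
    have hd : dist ((x, y) : ℝ × ℝ) ((0, 0) : ℝ × ℝ) < δ := by
      rw [Prod.dist_eq]
      have h1 : dist x 0 < δ := by
        rw [Real.dist_eq, sub_zero, abs_of_nonneg hx0]
        linarith
      have h2 : dist y 0 < δ := by
        rw [Real.dist_eq, sub_zero]
        have : |y| ≤ ε * h := hy.trans (by nlinarith)
        linarith
      exact max_lt h1 h2
    have := hδ (hWsub ⟨hx0, hxh, hy⟩) hd
    rw [hf0, Real.dist_eq, sub_zero] at this
    exact this.le
  -- Tietze extension
  obtain ⟨Fc, hFc⟩ := ContinuousMap.exists_restrict_eq (X := ℝ × ℝ) (Y := ℝ) hWclosed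
    ⟨W.restrict f₀, (hf.mono hWsub).restrict⟩
  have hFcW : ∀ p ∈ W, Fc p = f₀ p := by
    intro p hp
    have := congrFun (congrArg DFunLike.coe hFc) ⟨p, hp⟩
    exact this
  -- clamped, uniformly continuous modification
  set proj : ℝ × ℝ → ℝ × ℝ :=
    fun p => (max 0 (min p.1 h), max (-(ε * h)) (min p.2 (ε * h))) with hprojdef
  have hprojW : ∀ p ∈ W, proj p = p := by
    rintro ⟨x, y⟩ ⟨hx0, hxh, hy⟩
    simp only at hx0 hxh hy
    have hy1 : y ≤ ε * h := (abs_le.1 hy).2.trans (by nlinarith)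
    have hy2 : -(ε * h) ≤ y := by
      have := (abs_le.1 hy).1
      nlinarith
    simp only [hprojdef, Prod.mk.injEq]
    constructor
    · rw [min_eq_left hxh, max_eq_right hx0]
    · rw [min_eq_left hy1, max_eq_right hy2]
  have hprojlip : LipschitzWith 1 proj := by
    have h1 : LipschitzWith 1 (fun p : ℝ × ℝ => max 0 (min p.1 h)) := by
      simpa using ((LipschitzWith.prod_fst (α := ℝ) (β := ℝ)).min_const h).const_max 0
    have h2 : LipschitzWith 1 (fun p : ℝ × ℝ => max (-(ε * h)) (min p.2 (ε * h))) := by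
      simpa using ((LipschitzWith.prod_snd (α := ℝ) (β := ℝ)).min_const (ε * h)).const_max (-(ε * h))
    simpa using h1.prodMk h2
  have hprojmem : ∀ p, proj p ∈ Icc ((0 : ℝ), -(ε * h)) ((h : ℝ), ε * h) := by
    intro p
    rw [mem_Icc, Prod.le_def, Prod.le_def]
    refine ⟨⟨le_max_left _ _, le_max_left _ _⟩, ?_, ?_⟩
    · exact max_le hh0.le (min_le_right _ _)
    · refine max_le (show -(ε * h) ≤ ε * h by nlinarith) (min_le_right _ _)
  set Ft : ℝ × ℝ → ℝ := fun p => max (-ε) (min (Fc (proj p)) ε) with hFtdef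
  have hFtW : ∀ p ∈ W, Ft p = f₀ p := by
    intro p hp
    have h1 : |f₀ p| ≤ ε := hWsmall p hp
    simp only [hFtdef, hprojW p hp, hFcW p hp]
    rw [min_eq_left (abs_le.1 h1).2, max_eq_right (abs_le.1 h1).1]
  have hFtb : ∀ p, |Ft p| ≤ ε := by
    intro p
    rw [abs_le]
    constructor
    · exact le_max_left _ _
    · exact max_le (by linarith) (min_le_right _ _)
  have hFtuc : UniformContinuous Ft := by
    have hbox : IsCompact (Icc ((0 : ℝ), -(ε * h)) ((h : ℝ), ε * h)) := isCompact_Icc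
    have hFcuc := hbox.uniformContinuousOn_of_continuous Fc.continuous.continuousOn
    rw [Metric.uniformContinuousOn_iff] at hFcuc
    have huc2 : UniformContinuous fun p => Fc (proj p) := by
      rw [Metric.uniformContinuous_iff]
      intro σ hσ
      obtain ⟨δ', hδ'0, hδ'⟩ := hFcuc σ hσ
      refine ⟨δ', hδ'0, fun {p q} hpq => ?_⟩
      exact hδ' _ (hprojmem p) _ (hprojmem q)
        (lt_of_le_of_lt (by simpa using hprojlip.dist_le_mul p q) hpq)
    have := (((LipschitzWith.id (α := ℝ)).min_const ε).const_max
      (-ε)).uniformContinuous.comp huc2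
    simpa [Function.comp_def, hFtdef] using this
  -- Lipschitz approximations of Ft
  set A : ℕ → ℝ × ℝ → ℝ := fun k p => ⨅ q : ℝ × ℝ, (Ft q + (k : ℝ) * dist p q) with hAdef
  have hAle : ∀ (k : ℕ) p, A k p ≤ Ft p := fun k p => infConv_le hFtb _ (Nat.cast_nonneg k) p
  have hAge : ∀ (k : ℕ) p, -ε ≤ A k p := fun k p => infConv_ge hFtb _ (Nat.cast_nonneg k) p
  have hAb : ∀ (k : ℕ) p, |A k p| ≤ ε := by
    intro k p
    rw [abs_le]
    exact ⟨hAge k p, (hAle k p).trans (abs_le.1 (hFtb p)).2⟩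
  have hAlip : ∀ k : ℕ, LipschitzWith (k : ℝ≥0) (A k) := by
    intro k
    refine LipschitzWith.of_dist_le_mul fun p p' => ?_
    rw [Real.dist_eq, abs_sub_le_iff]
    have h1 := infConv_lip hFtb (k : ℝ) (Nat.cast_nonneg k) p p'
    have h2 := infConv_lip hFtb (k : ℝ) (Nat.cast_nonneg k) p' p
    rw [dist_comm p' p] at h2
    constructor
    · push_cast; linarith
    · push_cast; linarith
  have hAconv : ∀ σ > (0 : ℝ), ∃ K : ℕ, ∀ k : ℕ, K ≤ k → ∀ p, Ft p - A k p ≤ σ := by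
    intro σ hσ
    exact infConv_conv hFtb hFtuc hσ
  -- Picard-Lindelöf solutions
  have hsol : ∀ k : ℕ, ∃ φ : ℝ → ℝ, φ 0 = 0 ∧
      ∀ t ∈ Icc (0 : ℝ) h, HasDerivWithinAt φ (A k (t, φ t)) (Icc (0 : ℝ) h) t := by
    intro k
    have hPL : IsPicardLindelof (fun t y => A k (t, y)) (tmin := 0) (tmax := h)
        ⟨0, left_mem_Icc.2 hh0.le⟩ 0 ⟨ε * h, by positivity⟩ 0 ⟨ε, hε0.le⟩ (k : ℝ≥0) := by
      refine ⟨fun t ht => ?_, fun x hx => ?_,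
        fun t ht x hx => ?_, ?_⟩
      · have := (hAlip k).comp (LipschitzWith.prodMk_left t)
        rw [mul_one] at this
        exact this.lipschitzOnWith
      · exact ((hAlip k).continuous.comp
          (continuous_id.prodMk continuous_const)).continuousOn
      · exact (by simpa [Real.norm_eq_abs] using hAb k (t, x) : ‖A k (t, x)‖ ≤ ε)
      · simp [max_eq_left hh0.le]
        exact le_rfl
    exact IsPicardLindelof.exists_eq_forall_mem_Icc_hasDerivWithinAt₀ hPL
  choose Φ hΦ0 hΦd using hsol
  have hΦlip : ∀ k : ℕ, ∀ x ∈ Icc (0 : ℝ) h, ∀ y ∈ Icc (0 : ℝ) h,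
      |Φ k x - Φ k y| ≤ ε * |x - y| := by
    intro k x hx y hy
    have := Convex.norm_image_sub_le_of_norm_hasDerivWithin_le
      (f' := fun t => A k (t, Φ k t)) (fun t ht => hΦd k t ht)
      (fun t ht => by simpa [Real.norm_eq_abs] using hAb k (t, Φ k t))
      (convex_Icc _ _) hy hx
    simpa [Real.norm_eq_abs] using this
  have hΦabs : ∀ k : ℕ, ∀ t ∈ Icc (0 : ℝ) h, |Φ k t| ≤ ε * t := by
    intro k t ht
    have := hΦlip k t ht 0 (left_mem_Icc.2 hh0.le)
    rw [hΦ0 k, sub_zero, sub_zero, abs_of_nonneg ht.1] at this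
    exact this
  have hΦW : ∀ k : ℕ, ∀ t ∈ Icc (0 : ℝ) h, ((t : ℝ), Φ k t) ∈ W :=
    fun k t ht => ⟨ht.1, ht.2, hΦabs k t ht⟩
  have hΦcont : ∀ k : ℕ, ContinuousOn (Φ k) (Icc (0 : ℝ) h) :=
    fun k t ht => (hΦd k t ht).continuousWithinAt
  have hΦeq : ∀ k : ℕ, ∀ t ∈ Icc (0 : ℝ) h,
      Φ k t = ∫ u in (0 : ℝ)..t, A k (u, Φ k u) := by
    intro k t ht
    have hIcc : Icc (0 : ℝ) t ⊆ Icc (0 : ℝ) h := Icc_subset_Icc le_rfl ht.2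
    have hint : IntervalIntegrable (fun u => A k (u, Φ k u)) MeasureTheory.volume 0 t := by
      apply ContinuousOn.intervalIntegrable
      rw [uIcc_of_le ht.1]
      exact (hAlip k).continuous.comp_continuousOn
        (continuousOn_id.prodMk ((hΦcont k).mono hIcc))
    have := integral_eq_sub_of_hasDeriv_right_of_le ht.1
      ((hΦcont k).mono hIcc) (fun x hx => ?_) hint
    · rw [this, hΦ0 k, sub_zero]
    · have hxh : x ∈ Ioo (0 : ℝ) h := ⟨hx.1, lt_of_lt_of_le hx.2 ht.2⟩
      exact ((hΦd k x (Ioo_subset_Icc_self hxh)).hasDerivAt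
        (Icc_mem_nhds hxh.1 hxh.2)).hasDerivWithinAt
  -- Arzelà–Ascoli
  set X := Icc (0 : ℝ) h
  set εnn : ℝ≥0 := ⟨ε, hε0.le⟩ with hεnn
  set S : Set C(X, ℝ) :=
    {g | LipschitzWith εnn g ∧ ∀ x : X, g x ∈ Icc (-(ε * h)) (ε * h)} with hSdef
  have hS1 : IsCompact (ContinuousMap.toFun '' S) := by
    have himg : ContinuousMap.toFun '' S =
        {f : X → ℝ | LipschitzWith εnn f ∧ ∀ x : X, f x ∈ Icc (-(ε * h)) (ε * h)} := by
      ext f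
      constructor
      · rintro ⟨g, hg, rfl⟩
        exact hg
      · rintro ⟨h1, h2⟩
        exact ⟨⟨f, h1.continuous⟩, ⟨h1, h2⟩, rfl⟩
    rw [himg]
    have hP : IsCompact (univ.pi fun _ : X => Icc (-(ε * h)) (ε * h)) :=
      isCompact_univ_pi fun _ => isCompact_Icc
    refine IsCompact.of_isClosed_subset hP ?_ ?_
    · have e1 : {f : X → ℝ | LipschitzWith εnn f} =
          ⋂ (x : X) (y : X), {f : X → ℝ | dist (f x) (f y) ≤ (εnn : ℝ) * dist x y} := by
        ext f
        simp only [mem_setOf_eq, mem_iInter, lipschitzWith_iff_dist_le_mul]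
      have h1 : IsClosed {f : X → ℝ | LipschitzWith εnn f} := by
        rw [e1]
        exact isClosed_iInter fun x => isClosed_iInter fun y =>
          isClosed_le ((continuous_apply x).dist (continuous_apply y)) continuous_const
      have h2 : IsClosed {f : X → ℝ | ∀ x : X, f x ∈ Icc (-(ε * h)) (ε * h)} := by
        have e2 : {f : X → ℝ | ∀ x : X, f x ∈ Icc (-(ε * h)) (ε * h)} =
            ⋂ (x : X), (fun f : X → ℝ => f x) ⁻¹' Icc (-(ε * h)) (ε * h) := by
          ext f; simp
        rw [e2]
        exact isClosed_iInter fun x => isClosed_Icc.preimage (continuous_apply x)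
      exact (h1.inter h2 : IsClosed _)
    · rintro f ⟨h1, h2⟩ x -
      exact h2 x
  have hS2 : Equicontinuous ((↑) : S → X → ℝ) := by
    refine Metric.equicontinuous_of_continuity_modulus (fun t => ε * t) ?_ _ ?_
    · have : Tendsto (fun t : ℝ => ε * t) (𝓝 0) (𝓝 (ε * 0)) :=
        (continuous_const.mul continuous_id).tendsto 0
      simpa using this
    · intro x y i
      have := i.2.1.dist_le_mul x y
      exact this
  have hScpt : IsCompact S := ArzelaAscoli.isCompact_of_equicontinuous S hS1 hS2
  set gseq : ℕ → C(X, ℝ) := fun k => ⟨fun x => Φ k x, (hΦcont k).restrict⟩ with hgseq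
  have hgseqS : ∀ k, gseq k ∈ S := by
    intro k
    constructor
    · refine LipschitzWith.of_dist_le_mul fun x y => ?_
      have := hΦlip k x x.2 y y.2
      rw [Subtype.dist_eq, Real.dist_eq, Real.dist_eq]
      exact this
    · intro x
      rw [mem_Icc, ← abs_le]
      refine (hΦabs k x x.2).trans ?_
      nlinarith [x.2.1, x.2.2]
  obtain ⟨g, hgS, σf, hσmono, hglim⟩ := hScpt.tendsto_subseq hgseqS
  have hptw : ∀ x : X, Tendsto (fun n => gseq (σf n) x) atTop (𝓝 (g x)) := by
    intro x
    exact ((continuous_eval_const x).tendsto g).comp hglim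
  have hunif : ∀ r > (0 : ℝ), ∀ᶠ n in atTop, ∀ x : X, dist (gseq (σf n) x) (g x) < r := by
    intro r hr
    obtain ⟨N, hN⟩ := Metric.tendsto_atTop.1 hglim r hr
    refine eventually_atTop.2 ⟨N, fun n hn x => ?_⟩
    exact lt_of_le_of_lt (ContinuousMap.dist_apply_le_dist x) (hN n hn)
  -- the limit function
  set φ : ℝ → ℝ := fun x => g ⟨max 0 (min x h),
    ⟨le_max_left _ _, max_le hh0.le (min_le_right _ _)⟩⟩ with hφdef
  have hφeqg : ∀ x (hx : x ∈ Icc (0 : ℝ) h), φ x = g ⟨x, hx⟩ := by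
    intro x hx
    simp only [hφdef]
    congr 1
    exact Subtype.ext (by show max 0 (min x h) = x; rw [min_eq_left hx.2, max_eq_right hx.1])
  have hφcont : Continuous φ := by
    refine g.continuous.comp (Continuous.subtype_mk ?_ _)
    exact continuous_const.max (continuous_id.min continuous_const)
  have h0X : (0 : ℝ) ∈ Icc (0 : ℝ) h := left_mem_Icc.2 hh0.le
  have hφ0 : φ 0 = 0 := by
    rw [hφeqg 0 h0X]
    have h1 : Tendsto (fun n => gseq (σf n) ⟨0, h0X⟩) atTop (𝓝 (g ⟨0, h0X⟩)) := hptw _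
    have h2 : (fun n => gseq (σf n) ⟨0, h0X⟩) = fun _ => (0 : ℝ) := by
      funext n
      exact hΦ0 (σf n)
    rw [h2] at h1
    exact (tendsto_nhds_unique h1 tendsto_const_nhds).symm ▸ rfl
  have hφabs : ∀ x (hx : x ∈ Icc (0 : ℝ) h), |φ x| ≤ ε * x := by
    intro x hx
    rw [hφeqg x hx]
    have h1 : Tendsto (fun n => |gseq (σf n) ⟨x, hx⟩|) atTop (𝓝 |g ⟨x, hx⟩|) := (hptw _).abs
    exact le_of_tendsto h1 (Eventually.of_forall fun n => hΦabs (σf n) x hx)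
  have hφW : ∀ x ∈ Icc (0 : ℝ) h, ((x : ℝ), φ x) ∈ W := fun x hx => ⟨hx.1, hx.2, hφabs x hx⟩
  -- the limit integral equation
  set q : ℝ → ℝ := fun u => Ft (u, φ u) with hqdef
  have hqcont : Continuous q := hFtuc.continuous.comp (continuous_id.prodMk hφcont)
  have hqint : ∀ t : ℝ, IntervalIntegrable q MeasureTheory.volume 0 t := fun t =>
    hqcont.intervalIntegrable _ _
  have hφint : ∀ t (ht : t ∈ Icc (0 : ℝ) h), φ t = ∫ u in (0 : ℝ)..t, q u := by
    intro t ht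
    have hlhs : Tendsto (fun n => Φ (σf n) t) atTop (𝓝 (φ t)) := by
      rw [hφeqg t ht]
      exact hptw ⟨t, ht⟩
    have hrhs : Tendsto (fun n => Φ (σf n) t) atTop (𝓝 (∫ u in (0 : ℝ)..t, q u)) := by
      rw [Metric.tendsto_atTop]
      intro r hr
      have hr' : 0 < r / (h + 1) := by positivity
      obtain ⟨K, hK⟩ := hAconv (r / (h + 1) / 2) (by positivity)
      obtain ⟨δ'', hδ''0, hδ''⟩ := Metric.uniformContinuous_iff.1 hFtuc (r / (h + 1) / 2)
        (by positivity)
      obtain ⟨N1, hN1⟩ := eventually_atTop.1 (hunif δ'' hδ''0)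
      refine ⟨max K N1, fun n hn => ?_⟩
      have hnK : K ≤ σf n := le_trans (le_trans (le_max_left _ _) hn) (hσmono.le_apply)
      have hnN1 : N1 ≤ n := le_trans (le_max_right _ _) hn
      -- pointwise bound on the integrand
      have hbound : ∀ u ∈ Icc (0 : ℝ) t,
          |A (σf n) (u, Φ (σf n) u) - q u| ≤ r / (h + 1) := by
        intro u hu
        have huh : u ∈ Icc (0 : ℝ) h := ⟨hu.1, hu.2.trans ht.2⟩
        have t1 : |A (σf n) (u, Φ (σf n) u) - Ft (u, Φ (σf n) u)| ≤ r / (h + 1) / 2 := by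
          rw [abs_sub_comm, abs_of_nonneg (by linarith [hAle (σf n) (u, Φ (σf n) u)])]
          exact hK (σf n) hnK _
        have t2 : |Ft (u, Φ (σf n) u) - Ft (u, φ u)| ≤ r / (h + 1) / 2 := by
          have hdd : dist ((u, Φ (σf n) u) : ℝ × ℝ) ((u, φ u) : ℝ × ℝ) < δ'' := by
            rw [Prod.dist_eq]
            have := hN1 n hnN1 ⟨u, huh⟩
            rw [hφeqg u huh]
            simp only [dist_self]
            exact max_lt hδ''0 (by exact this)
          have := hδ'' hdd
          rw [Real.dist_eq] at this
          exact this.le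
        calc |A (σf n) (u, Φ (σf n) u) - q u|
            ≤ |A (σf n) (u, Φ (σf n) u) - Ft (u, Φ (σf n) u)| +
              |Ft (u, Φ (σf n) u) - Ft (u, φ u)| := by
              rw [hqdef]
              exact abs_sub_le _ _ _
          _ ≤ r / (h + 1) / 2 + r / (h + 1) / 2 := add_le_add t1 t2
          _ = r / (h + 1) := by ring
      have hintA : IntervalIntegrable (fun u => A (σf n) (u, Φ (σf n) u))
          MeasureTheory.volume 0 t := by
        apply ContinuousOn.intervalIntegrable
        rw [uIcc_of_le ht.1]
        exact (hAlip (σf n)).continuous.comp_continuousOn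
          (continuousOn_id.prodMk ((hΦcont (σf n)).mono (Icc_subset_Icc le_rfl ht.2)))
      have hdiff : dist (Φ (σf n) t) (∫ u in (0 : ℝ)..t, q u) ≤ r / (h + 1) * h := by
        rw [hΦeq (σf n) t ht, Real.dist_eq, ← intervalIntegral.integral_sub hintA (hqint t)]
        have := intervalIntegral.norm_integral_le_of_norm_le_const
          (C := r / (h + 1)) (f := fun u => A (σf n) (u, Φ (σf n) u) - q u)
          (a := 0) (b := t) ?_
        · rw [Real.norm_eq_abs] at this
          refine this.trans ?_
          rw [sub_zero, abs_of_nonneg ht.1]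
          exact mul_le_mul_of_nonneg_left ht.2 hr'.le
        · intro u hu
          rw [uIoc_of_le ht.1] at hu
          exact (Real.norm_eq_abs _) ▸ hbound u (Ioc_subset_Icc_self hu)
      refine lt_of_le_of_lt hdiff ?_
      rw [div_mul_eq_mul_div, div_lt_iff₀ (by linarith)]
      nlinarith
    exact tendsto_nhds_unique hlhs hrhs
  -- conclusion
  refine ⟨h, ⟨hh0, hhc⟩, φ, hφ0, fun x hx => ⟨hWsub (hφW x hx), ?_⟩⟩
  have hψ : HasDerivAt (fun u => ∫ v in (0 : ℝ)..u, q v) (q x) x :=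
    intervalIntegral.integral_hasDerivAt_right (hqint x)
      (hqcont.stronglyMeasurableAtFilter _ _) hqcont.continuousAt
  have hq_eq : q x = f₀ (x, φ x) := by
    rw [hqdef]
    exact hFtW _ (hφW x hx)
  rw [← hq_eq]
  exact hψ.hasDerivWithinAt.congr (fun y hy => hφint y hy) (hφint x hx)
end

section
/- Theorem 1, case O⁺₁,₌: Assume there exist a > 0 and a continuously differentiable function b : [0,a] → ℝ with b(0) = 0, b'(0) = 0, b concave on [0,a], such that (x, b(x)) ∈ Ĝ for every x ∈ (0,a], the boundary condition (5⁺ₗ) holds: f₀(x, b(x)) ≥ b'(x) for all x ∈ (0,a], and there exists c ∈ (0,a] such that every point (x,y) with 0 < x ≤ c and b(x) < y ≤ c belongs to G. Then there exist h ∈ (0,c] and a function φ : [0,h] → ℝ with φ(0) = 0 which is a solution of y' = f₀(x,y) with graph in G̃ on [0,h]. -/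
open Set MeasureTheory intervalIntegral Filter Topology BoundedContinuousFunction

noncomputable def tonelli (f : ℝ × ℝ → ℝ) (d : ℝ) : ℕ → ℝ → ℝ
  | 0 => fun _ => 0
  | (k+1) => fun x => ∫ t in (0:ℝ)..(max (x - d) 0), f (t, tonelli f d k t)

theorem tonelli_cont {f : ℝ × ℝ → ℝ} (hf : Continuous f) (d : ℝ) :
    ∀ k, Continuous (tonelli f d k) := by
  intro k
  induction k with
  | zero => exact continuous_const
  | succ k ih =>
    have hg : Continuous fun t => f (t, tonelli f d k t) :=
      hf.comp (continuous_id.prodMk ih)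
    have hprim : Continuous fun s => ∫ t in (0:ℝ)..s, f (t, tonelli f d k t) := by
      refine continuous_iff_continuousAt.2 fun y => ?_
      exact ((hg.integral_hasStrictDerivAt 0 y).hasDerivAt).continuousAt
    exact hprim.comp ((continuous_id.sub continuous_const).max continuous_const)

theorem tonelli_lip {f : ℝ × ℝ → ℝ} (hf : Continuous f) {M : ℝ}
    (hbd : ∀ p, |f p| ≤ M) (d : ℝ) :
    ∀ k x y, |tonelli f d k x - tonelli f d k y| ≤ M * |x - y| := by
  intro k
  have hM : 0 ≤ M := le_trans (abs_nonneg _) (hbd (0, 0))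
  induction k with
  | zero => intro x y; simpa [tonelli] using mul_nonneg hM (abs_nonneg (x - y))
  | succ k ih =>
    intro x y
    have hg : Continuous fun t => f (t, tonelli f d k t) :=
      hf.comp (continuous_id.prodMk (tonelli_cont hf d k))
    have hint : ∀ u v : ℝ, IntervalIntegrable (fun t => f (t, tonelli f d k t)) volume u v :=
      fun u v => hg.intervalIntegrable u v
    have key : tonelli f d (k+1) x - tonelli f d (k+1) y
        = ∫ t in (max (y - d) 0)..(max (x - d) 0), f (t, tonelli f d k t) := by
      simp only [tonelli]
      rw [← integral_add_adjacent_intervals (hint 0 (max (y-d) 0)) (hint (max (y-d) 0) (max (x-d) 0))]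
      ring
    rw [key]
    calc |∫ t in (max (y - d) 0)..(max (x - d) 0), f (t, tonelli f d k t)|
        ≤ M * |max (x - d) 0 - max (y - d) 0| := by
          rw [← Real.norm_eq_abs]
          apply intervalIntegral.norm_integral_le_of_norm_le_const
          intro t _; rw [Real.norm_eq_abs]; exact hbd _
      _ ≤ M * |x - y| := by
          apply mul_le_mul_of_nonneg_left _ hM
          calc |max (x - d) 0 - max (y - d) 0| ≤ |(x - d) - (y - d)| :=
                abs_max_sub_max_le_abs _ _ _
            _ = |x - y| := by ring_nf

theorem tonelli_bound {f : ℝ × ℝ → ℝ} (hf : Continuous f) {M : ℝ}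
    (hbd : ∀ p, |f p| ≤ M) {d : ℝ} (hd : 0 ≤ d) (k : ℕ) (x : ℝ) :
    |tonelli f d k x| ≤ M * |x| := by
  have hM : 0 ≤ M := le_trans (abs_nonneg _) (hbd (0, 0))
  cases k with
  | zero => simpa [tonelli] using mul_nonneg hM (abs_nonneg x)
  | succ k =>
    have hg : Continuous fun t => f (t, tonelli f d k t) :=
      hf.comp (continuous_id.prodMk (tonelli_cont hf d k))
    show |∫ t in (0:ℝ)..(max (x - d) 0), f (t, tonelli f d k t)| ≤ M * |x|
    calc |∫ t in (0:ℝ)..(max (x - d) 0), f (t, tonelli f d k t)|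
        ≤ M * |max (x - d) 0 - 0| := by
          rw [← Real.norm_eq_abs]
          apply intervalIntegral.norm_integral_le_of_norm_le_const
          intro t _; rw [Real.norm_eq_abs]; exact hbd _
      _ ≤ M * |x| := by
          apply mul_le_mul_of_nonneg_left _ hM
          rw [sub_zero, abs_of_nonneg (le_max_right _ _)]
          have h1 : x - d ≤ |x| := by
            have := abs_nonneg x; have := le_abs_self x; linarith
          exact max_le h1 (abs_nonneg x)

theorem tonelli_stab {f : ℝ × ℝ → ℝ} {d : ℝ} (hd : 0 < d) :
    ∀ k : ℕ, ∀ x ≤ (k : ℝ) * d, tonelli f d (k+1) x = tonelli f d k x := by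
  intro k
  induction k with
  | zero =>
    intro x hx
    norm_num at hx
    have : max (x - d) 0 = 0 := max_eq_right (by linarith)
    simp [tonelli, this]
  | succ k ih =>
    intro x hx
    show (∫ t in (0:ℝ)..(max (x - d) 0), f (t, tonelli f d (k+1) t))
        = ∫ t in (0:ℝ)..(max (x - d) 0), f (t, tonelli f d k t)
    apply intervalIntegral.integral_congr
    intro t ht
    rw [uIcc_of_le (le_max_right _ _)] at ht
    have htk : t ≤ (k : ℝ) * d := by
      rcases le_or_gt (x - d) 0 with h | h
      · have : t ≤ 0 := by simpa [max_eq_right h] using ht.2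
        nlinarith [Nat.cast_nonneg (α := ℝ) k]
      · have : t ≤ x - d := by simpa [max_eq_left h.le] using ht.2
        push_cast at hx ⊢
        linarith
    simp only []
    rw [ih t htk]


variable {f : ℝ × ℝ → ℝ} {M : ℝ}

set_option maxHeartbeats 2000000 in
theorem peano_aux (f : ℝ × ℝ → ℝ) (hf : Continuous f) (M : ℝ) (hM : 0 < M)
    (hbd : ∀ p, |f p| ≤ M) (h : ℝ) (hh : 0 < h) :
    ∃ φ : ℝ → ℝ, φ 0 = 0 ∧ (∀ x, |φ x| ≤ M * |x|) ∧
      ∀ x ∈ Icc (0:ℝ) h, HasDerivAt φ (f (x, φ x)) x := by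
  classical
  set d : ℕ → ℝ := fun n => h / (n + 1) with hd_def
  have hd : ∀ n, 0 < d n := fun n => div_pos hh (by positivity)
  set φn : ℕ → ℝ → ℝ := fun n => tonelli f (d n) (n + 2) with hφn_def
  have contn : ∀ n, Continuous (φn n) := fun n => tonelli_cont hf (d n) _
  have lipn : ∀ n x y, |φn n x - φn n y| ≤ M * |x - y| := fun n => tonelli_lip hf hbd (d n) _
  have φn0 : ∀ n, φn n 0 = 0 := by
    intro n
    show (∫ t in (0:ℝ)..(max (0 - d n) 0), f (t, tonelli f (d n) (n+1) t)) = 0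
    rw [max_eq_right (by linarith [hd n]), intervalIntegral.integral_same]
  have eqn : ∀ n, ∀ x ∈ Icc (0:ℝ) h,
      φn n x = ∫ t in (0:ℝ)..(max (x - d n) 0), f (t, φn n t) := by
    intro n x hx
    show (∫ t in (0:ℝ)..(max (x - d n) 0), f (t, tonelli f (d n) (n+1) t)) = _
    apply intervalIntegral.integral_congr
    intro t ht
    rw [uIcc_of_le (le_max_right _ _)] at ht
    have htle : t ≤ ((n:ℝ) + 1) * d n := by
      have h1 : max (x - d n) 0 ≤ ((n:ℝ)) * d n := by
        have : x ≤ ((n:ℝ) + 1) * d n := by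
          have : ((n:ℝ) + 1) * d n = h := by
            show ((n:ℝ) + 1) * (h / ((n:ℝ) + 1)) = h
            field_simp
          linarith [hx.2, this]
        have h2 : (0:ℝ) ≤ (n:ℝ) * d n := by positivity
        exact max_le (by linarith) h2
      have : (0:ℝ) ≤ d n := (hd n).le
      nlinarith [ht.2]
    have := tonelli_stab (f := f) (hd n) (n+1) t (by push_cast; linarith)
    simp only [hφn_def]
    rw [show ((n:ℕ)+1+1 : ℕ) = n+2 from rfl] at this
    rw [this]
  -- Arzelà–Ascoli
  have h0mem : (0:ℝ) ∈ Icc (0:ℝ) h := ⟨le_refl _, hh.le⟩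
  set α := ↥(Icc (0:ℝ) h)
  set z₀ : α := ⟨0, h0mem⟩ with hz₀
  set A : Set (α →ᵇ ℝ) :=
    {u | (∀ p q : α, dist (u p) (u q) ≤ M * dist p q) ∧ u z₀ = 0} with hA
  have closedA : IsClosed A := by
    have : A = (⋂ p : α, ⋂ q : α, {u : α →ᵇ ℝ | dist (u p) (u q) ≤ M * dist p q})
        ∩ {u : α →ᵇ ℝ | u z₀ = 0} := by
      ext u; simp [hA, Set.mem_iInter]
    rw [this]
    refine IsClosed.inter (isClosed_iInter fun p => isClosed_iInter fun q => ?_)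
      (isClosed_eq (continuous_eval_const _) continuous_const)
    exact isClosed_le ((continuous_eval_const _).dist (continuous_eval_const _)) continuous_const
  have in_s : ∀ (u : α →ᵇ ℝ) (x : α), u ∈ A → u x ∈ Icc (-(M*h)) (M*h) := by
    intro u x hu
    have h1 : dist (u x) (u z₀) ≤ M * dist x z₀ := hu.1 x z₀
    have h2 : dist x z₀ ≤ h := by
      rw [Subtype.dist_eq, Real.dist_eq]
      have := x.2.1; have := x.2.2
      rw [abs_of_nonneg (by rw [hz₀]; simpa using x.2.1)]
      rw [hz₀]; simpa using x.2.2
    rw [hu.2, Real.dist_eq, sub_zero] at h1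
    have : |u x| ≤ M * h := le_trans h1 (by nlinarith)
    exact abs_le.1 this
  have equi : Equicontinuous ((↑) : A → α → ℝ) := by
    intro x₀
    rw [Metric.equicontinuousAt_iff]
    intro ε hε
    refine ⟨ε / M, div_pos hε hM, fun x hx i => ?_⟩
    calc dist (i.1 x₀) (i.1 x) ≤ M * dist x x₀ := by
          rw [dist_comm]; exact i.2.1 x x₀
      _ < M * (ε / M) := by apply mul_lt_mul_of_pos_left hx hM
      _ = ε := by field_simp
  have compactA : IsCompact A :=
    arzela_ascoli₂ (Icc (-(M*h)) (M*h)) isCompact_Icc A closedA in_s equi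
  set Fn : ℕ → (α →ᵇ ℝ) := fun n =>
    mkOfCompact ⟨fun p => φn n p.1, (contn n).comp continuous_subtype_val⟩ with hFn
  have FnA : ∀ n, Fn n ∈ A := by
    intro n
    constructor
    · intro p q
      simp only [hFn, mkOfCompact_apply, ContinuousMap.coe_mk]
      rw [Subtype.dist_eq, Real.dist_eq, Real.dist_eq]
      exact lipn n p.1 q.1
    · simp only [hFn, mkOfCompact_apply, ContinuousMap.coe_mk]
      exact φn0 n
  obtain ⟨u, huA, σ, hσ, hconv⟩ := compactA.tendsto_subseq FnA
  set U : ℝ → ℝ := fun x => u (projIcc 0 h hh.le x) with hU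
  have hUc : Continuous U := u.continuous.comp continuous_projIcc
  have hUeq : ∀ x (hx : x ∈ Icc (0:ℝ) h), U x = u ⟨x, hx⟩ := by
    intro x hx
    show u (projIcc 0 h hh.le x) = u ⟨x, hx⟩
    rw [projIcc_of_mem hh.le hx]
  have ptconv : ∀ x (hx : x ∈ Icc (0:ℝ) h),
      Tendsto (fun k => φn (σ k) x) atTop (𝓝 (U x)) := by
    intro x hx
    have h1 : Tendsto (fun k => (Fn (σ k)) ⟨x, hx⟩) atTop (𝓝 (u ⟨x, hx⟩)) :=
      ((continuous_eval_const (⟨x, hx⟩ : α)).tendsto u).comp hconv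
    rw [hUeq x hx]
    simpa only [hFn, mkOfCompact_apply, ContinuousMap.coe_mk] using h1
  have inteq : ∀ x ∈ Icc (0:ℝ) h, U x = ∫ t in (0:ℝ)..x, f (t, U t) := by
    intro x hx
    have T1 : Tendsto (fun k => ∫ t in (0:ℝ)..x, f (t, φn (σ k) t)) atTop
        (𝓝 (∫ t in (0:ℝ)..x, f (t, U t))) := by
      apply intervalIntegral.tendsto_integral_filter_of_dominated_convergence
        (bound := fun _ => M)
      · exact Eventually.of_forall fun k =>
          ((hf.comp (continuous_id.prodMk (contn _))).aestronglyMeasurable)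
      · exact Eventually.of_forall fun k => ae_of_all _ fun t _ => by
          rw [Real.norm_eq_abs]; exact hbd _
      · exact intervalIntegrable_const
      · refine ae_of_all _ fun t ht => ?_
        rw [uIoc_of_le hx.1] at ht
        have htmem : t ∈ Icc (0:ℝ) h := ⟨ht.1.le, ht.2.trans hx.2⟩
        have := ptconv t htmem
        exact (hf.tendsto (t, U t)).comp (tendsto_const_nhds.prodMk_nhds this)
    have T2 : Tendsto (fun k => ∫ t in (max (x - d (σ k)) 0)..x, f (t, φn (σ k) t)) atTop
        (𝓝 0) := by
      have bnd : ∀ k, ‖∫ t in (max (x - d (σ k)) 0)..x, f (t, φn (σ k) t)‖ ≤ M * d k := by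
        intro k
        calc ‖∫ t in (max (x - d (σ k)) 0)..x, f (t, φn (σ k) t)‖
            ≤ M * |x - max (x - d (σ k)) 0| := by
              apply intervalIntegral.norm_integral_le_of_norm_le_const
              intro t _; rw [Real.norm_eq_abs]; exact hbd _
          _ ≤ M * d (σ k) := by
              apply mul_le_mul_of_nonneg_left _ hM.le
              rcases le_or_gt (x - d (σ k)) 0 with h1 | h1
              · rw [max_eq_right h1, sub_zero, abs_of_nonneg hx.1]; linarith
              · rw [max_eq_left h1.le, abs_of_nonneg (by linarith [hd (σ k)])]
                linarith [hd (σ k)]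
          _ ≤ M * d k := by
              have hk : ((k:ℝ) + 1) ≤ ((σ k : ℝ) + 1) := by
                have h2 : (k:ℕ) ≤ σ k := hσ.le_apply
                have : (k:ℝ) ≤ (σ k : ℝ) := by exact_mod_cast h2
                linarith
              have hdd : d (σ k) ≤ d k := by
                show h / ((σ k : ℝ) + 1) ≤ h / ((k:ℝ) + 1)
                gcongr
              exact mul_le_mul_of_nonneg_left hdd hM.le
      have lim0 : Tendsto (fun k : ℕ => M * d k) atTop (𝓝 0) := by
        have h1 : Tendsto (fun k : ℕ => h / ((k:ℝ) + 1)) atTop (𝓝 0) := by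
          apply Tendsto.div_atTop tendsto_const_nhds
          exact tendsto_natCast_atTop_atTop.atTop_add tendsto_const_nhds
        simpa using (h1.const_mul M)
      exact squeeze_zero_norm bnd lim0
    have split : ∀ k, φn (σ k) x
        = (∫ t in (0:ℝ)..x, f (t, φn (σ k) t))
          - ∫ t in (max (x - d (σ k)) 0)..x, f (t, φn (σ k) t) := by
      intro k
      have hint : ∀ u v : ℝ, IntervalIntegrable (fun t => f (t, φn (σ k) t)) volume u v :=
        fun u v => (hf.comp (continuous_id.prodMk (contn _))).intervalIntegrable u v
      rw [eqn (σ k) x hx]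
      rw [← integral_add_adjacent_intervals (hint 0 (max (x - d (σ k)) 0)) (hint _ x)]
      ring
    have Tcomb : Tendsto (fun k => φn (σ k) x) atTop
        (𝓝 ((∫ t in (0:ℝ)..x, f (t, U t)) - 0)) := by
      simp_rw [split]
      exact T1.sub T2
    rw [sub_zero] at Tcomb
    exact tendsto_nhds_unique (ptconv x hx) Tcomb
  -- conclude
  set g : ℝ → ℝ := fun t => f (t, U t) with hg
  have hgc : Continuous g := hf.comp (continuous_id.prodMk hUc)
  set Φ : ℝ → ℝ := fun x => ∫ t in (0:ℝ)..x, g t with hΦ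
  have hΦU : ∀ x ∈ Icc (0:ℝ) h, Φ x = U x := fun x hx => (inteq x hx).symm
  refine ⟨Φ, ?_, fun x => ?_, fun x hx => ?_⟩
  · show (∫ t in (0:ℝ)..(0:ℝ), g t) = 0
    exact intervalIntegral.integral_same
  · have step : ‖∫ t in (0:ℝ)..x, g t‖ ≤ M * |x - 0| := by
      apply intervalIntegral.norm_integral_le_of_norm_le_const
      intro t _; rw [Real.norm_eq_abs]; exact hbd _
    show |∫ t in (0:ℝ)..x, g t| ≤ M * |x|
    rw [sub_zero] at step
    exact step
  · have hd1 : HasDerivAt Φ (g x) x := (hgc.integral_hasStrictDerivAt 0 x).hasDerivAt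
    have heq : g x = f (x, Φ x) := by
      show f (x, U x) = f (x, Φ x)
      rw [hΦU x hx]
    rwa [heq] at hd1


set_option maxHeartbeats 1000000 in
/-- Theorem 1, case O⁺₁,₌. -/
theorem theorem1_case_O1_eq
    (G Ghat : Set (ℝ × ℝ)) (hGopen : IsOpen G) (hGhat : Ghat ⊆ frontier G)
    (f₀ : ℝ × ℝ → ℝ) (hf : ContinuousOn f₀ (G ∪ Ghat))
    (hO : ((0 : ℝ), (0 : ℝ)) ∈ Ghat) (hf0 : f₀ (0, 0) = 0)
    (a : ℝ) (ha : 0 < a)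
    (b b' : ℝ → ℝ)
    (hderiv : ∀ x ∈ Icc (0 : ℝ) a, HasDerivWithinAt b (b' x) (Icc (0 : ℝ) a) x)
    (hb'cont : ContinuousOn b' (Icc (0 : ℝ) a))
    (hb0 : b 0 = 0) (hb'0 : b' 0 = 0)
    (hconc : ConcaveOn ℝ (Icc (0 : ℝ) a) b)
    (hcurve : ∀ x ∈ Ioc (0 : ℝ) a, (x, b x) ∈ Ghat)
    (hbc : ∀ x ∈ Ioc (0 : ℝ) a, b' x ≤ f₀ (x, b x))
    (c : ℝ) (hc : c ∈ Ioc (0 : ℝ) a)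
    (hin : ∀ x y : ℝ, 0 < x → x ≤ c → b x < y → y ≤ c → (x, y) ∈ G) :
    ∃ h ∈ Ioc (0 : ℝ) c, ∃ φ : ℝ → ℝ, φ 0 = 0 ∧
      ∀ x ∈ Icc (0 : ℝ) h, (x, φ x) ∈ G ∪ Ghat ∧
        HasDerivWithinAt φ (f₀ (x, φ x)) (Icc (0 : ℝ) h) x := by
  obtain ⟨hc0, hca⟩ := hc
  have hbcont : ContinuousOn b (Icc 0 a) := fun x hx => (hderiv x hx).continuousWithinAt
  -- choose δ₁ controlling b'
  have hb'cw : ContinuousWithinAt b' (Icc (0:ℝ) a) 0 := hb'cont 0 ⟨le_refl _, ha.le⟩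
  rw [Metric.continuousWithinAt_iff] at hb'cw
  obtain ⟨δ₁, hδ₁, hδ₁p⟩ := hb'cw (1/4) (by norm_num)
  -- choose δ₂ controlling f₀
  have hf00 : ContinuousWithinAt f₀ (G ∪ Ghat) ((0:ℝ), (0:ℝ)) := hf _ (Or.inr hO)
  rw [Metric.continuousWithinAt_iff] at hf00
  obtain ⟨δ₂, hδ₂, hδ₂p⟩ := hf00 (1/4) (by norm_num)
  set h : ℝ := min (min (c/2) (δ₁/2)) (δ₂/2) with hh_def
  have hhpos : 0 < h := lt_min (lt_min (by linarith) (by linarith)) (by linarith)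
  have hhc2 : h ≤ c/2 := le_trans (min_le_left _ _) (min_le_left _ _)
  have hhδ₁ : h ≤ δ₁/2 := le_trans (min_le_left _ _) (min_le_right _ _)
  have hhδ₂ : h ≤ δ₂/2 := min_le_right _ _
  have hhc : h ≤ c := by linarith
  have hha : h < a := by linarith
  -- b' is small on [0, h]
  have hb'le : ∀ t ∈ Icc (0:ℝ) h, |b' t| ≤ 1/4 := by
    intro t ht
    have h1 : t ∈ Icc (0:ℝ) a := ⟨ht.1, le_trans ht.2 hha.le⟩
    have h2 : dist t 0 < δ₁ := by
      rw [Real.dist_eq, sub_zero, abs_of_nonneg ht.1]; linarith [ht.2]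
    have := hδ₁p h1 h2
    rw [hb'0, dist_zero_right, Real.norm_eq_abs] at this
    exact this.le
  -- |b x| ≤ x / 4 on [0, h]
  have hbabs : ∀ x ∈ Icc (0:ℝ) h, |b x| ≤ x / 4 := by
    intro x hx
    have hmvt := Convex.norm_image_sub_le_of_norm_hasDerivWithin_le
      (f := b) (f' := b') (s := Icc (0:ℝ) h) (C := 1/4)
      (fun y hy => (hderiv y ⟨hy.1, le_trans hy.2 hha.le⟩).mono
        (Icc_subset_Icc le_rfl hha.le))
      (fun y hy => by rw [Real.norm_eq_abs]; exact hb'le y hy)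
      (convex_Icc _ _) ⟨le_refl _, hhpos.le⟩ hx
    rw [hb0, sub_zero, Real.norm_eq_abs, Real.norm_eq_abs, sub_zero,
      abs_of_nonneg hx.1] at hmvt
    linarith
  -- the clamp map and modified vector field
  set cl : ℝ → ℝ := fun x => max 0 (min x h) with hcl_def
  have hclmem : ∀ x, cl x ∈ Icc (0:ℝ) h :=
    fun x => ⟨le_max_left _ _, max_le hhpos.le (min_le_right _ _)⟩
  set σm : ℝ × ℝ → ℝ × ℝ :=
    fun p => (cl p.1, max (b (cl p.1)) (min p.2 (b (cl p.1) + cl p.1))) with hσm_def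
  set K : Set (ℝ × ℝ) := {q | q.1 ∈ Icc (0:ℝ) h ∧ q.2 ∈ Icc (b q.1) (b q.1 + q.1)} with hK_def
  have hσK : ∀ p, σm p ∈ K := by
    intro p
    refine ⟨hclmem p.1, le_max_left _ _, max_le ?_ (min_le_right _ _)⟩
    linarith [(hclmem p.1).1]
  have hKsub : K ⊆ G ∪ Ghat := by
    rintro ⟨x, y⟩ ⟨hx, hy1, hy2⟩
    rcases eq_or_lt_of_le hx.1 with h0 | h0
    · have hx0 : x = 0 := h0.symm
      subst hx0
      have : y = 0 := le_antisymm (by simpa [hb0] using hy2) (by simpa [hb0] using hy1)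
      subst this
      exact Or.inr hO
    · rcases eq_or_lt_of_le hy1 with he | he
      · refine Or.inr ?_
        have hcv := hcurve x ⟨h0, le_trans hx.2 (le_trans hhc hca)⟩
        rwa [he] at hcv
      · refine Or.inl (hin x y h0 (le_trans hx.2 hhc) he ?_)
        have hb4 := abs_le.1 (hbabs x hx)
        have := hx.2
        linarith [hb4.2]
  have hKd : ∀ q ∈ K, dist q (((0:ℝ), (0:ℝ)) : ℝ × ℝ) < δ₂ := by
    rintro ⟨x, y⟩ ⟨hx, hy1, hy2⟩
    have hb4 := abs_le.1 (hbabs x hx)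
    rw [Prod.dist_eq]
    apply max_lt
    · rw [Real.dist_eq, sub_zero, abs_of_nonneg hx.1]
      linarith [hx.2]
    · rw [Real.dist_eq, sub_zero, abs_lt]
      constructor
      · nlinarith [hx.1, hx.2]
      · nlinarith [hx.1, hx.2]
  have hclc : Continuous cl := continuous_const.max (continuous_id.min continuous_const)
  have hbclc : Continuous fun x => b (cl x) := by
    apply hbcont.comp_continuous hclc
    intro x
    exact Icc_subset_Icc le_rfl hha.le (hclmem x)
  have hσc : Continuous σm := by
    apply Continuous.prodMk (hclc.comp continuous_fst)
    exact (hbclc.comp continuous_fst).max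
      (continuous_snd.min ((hbclc.comp continuous_fst).add (hclc.comp continuous_fst)))
  set ft : ℝ × ℝ → ℝ := fun p => f₀ (σm p) with hft_def
  have hftc : Continuous ft := hf.comp_continuous hσc fun p => hKsub (hσK p)
  have hftbd : ∀ p, |ft p| ≤ 1/4 := by
    intro p
    have := hδ₂p (hKsub (hσK p)) (hKd _ (hσK p))
    rw [hf0, dist_zero_right, Real.norm_eq_abs] at this
    exact this.le
  obtain ⟨Φ, hΦ0, hΦbd, hΦd⟩ := peano_aux ft hftc (1/4) (by norm_num) hftbd h hhpos
  have hΦcont : ContinuousOn Φ (Icc (0:ℝ) h) :=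
    fun x hx => (hΦd x hx).continuousAt.continuousWithinAt
  -- upper bound
  have upper : ∀ x ∈ Icc (0:ℝ) h, Φ x ≤ b x + x := by
    intro x hx
    have h1 := abs_le.1 (hΦbd x)
    rw [abs_of_nonneg hx.1] at h1
    have h2 := abs_le.1 (hbabs x hx)
    linarith [h1.2, h2.1]
  -- barrier: lower bound
  have lowerε : ∀ ε : ℝ, 0 < ε → ∀ x ∈ Icc (0:ℝ) h, b x - ε * x ≤ Φ x := by
    intro ε hε
    by_contra hcon
    push_neg at hcon
    obtain ⟨x₁, hx₁, hlt⟩ := hcon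
    set gE : ℝ → ℝ := fun x => Φ x - b x + ε * x with hgE_def
    have hg0 : gE 0 = 0 := by simp [hgE_def, hΦ0, hb0]
    have hgx₁ : gE x₁ < 0 := by simp only [hgE_def]; linarith
    have hx₁0 : 0 < x₁ := by
      rcases eq_or_lt_of_le hx₁.1 with h0 | h0
      · exfalso; rw [← h0] at hgx₁; rw [hg0] at hgx₁; exact absurd hgx₁ (lt_irrefl 0)
      · exact h0
    have hgcont : ContinuousOn gE (Icc (0:ℝ) h) := by
      apply ContinuousOn.add
      · exact hΦcont.sub (hbcont.mono (Icc_subset_Icc le_rfl hha.le))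
      · exact (continuous_const.mul continuous_id).continuousOn
    set S : Set ℝ := {x | x ∈ Icc (0:ℝ) x₁ ∧ gE x = 0} with hS_def
    have hSsub : Icc (0:ℝ) x₁ ⊆ Icc (0:ℝ) h := Icc_subset_Icc le_rfl hx₁.2
    have hSne : S.Nonempty := ⟨0, ⟨le_refl _, hx₁0.le⟩, hg0⟩
    have hSbdd : BddAbove S := ⟨x₁, fun y hy => hy.1.2⟩
    have hSclosed : IsClosed S := by
      have : S = Icc (0:ℝ) x₁ ∩ gE ⁻¹' {0} := by
        ext y; simp [hS_def]
      rw [this]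
      exact (hgcont.mono hSsub).preimage_isClosed_of_isClosed isClosed_Icc isClosed_singleton
    set x₀ : ℝ := sSup S with hx₀_def
    have hx₀S : x₀ ∈ S := hSclosed.csSup_mem hSne hSbdd
    have hx₀mem : x₀ ∈ Icc (0:ℝ) x₁ := hx₀S.1
    have hx₀lt : x₀ < x₁ := by
      rcases eq_or_lt_of_le hx₀mem.2 with h0 | h0
      · exfalso; rw [h0] at hx₀S; rw [hx₀S.2] at hgx₁; exact absurd hgx₁ (lt_irrefl 0)
      · exact h0
    have hneg : ∀ x ∈ Ioc x₀ x₁, gE x < 0 := by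
      intro x hxm
      by_contra hge
      push_neg at hge
      have hxlt : x < x₁ := by
        rcases eq_or_lt_of_le hxm.2 with h0 | h0
        · exfalso; rw [h0] at hge; linarith
        · exact h0
      have hsub2 : Icc x x₁ ⊆ Icc (0:ℝ) h :=
        Icc_subset_Icc (le_trans hx₀mem.1 hxm.1.le) hx₁.2
      have hivt := intermediate_value_Icc' hxlt.le (hgcont.mono hsub2)
      have h0mem' : (0:ℝ) ∈ Icc (gE x₁) (gE x) := ⟨hgx₁.le, hge⟩
      obtain ⟨z, hz, hz0⟩ := hivt h0mem'
      have hzS : z ∈ S := ⟨⟨le_trans (le_trans hx₀mem.1 hxm.1.le) hz.1, hz.2⟩, hz0⟩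
      have : z ≤ x₀ := le_csSup hSbdd hzS
      linarith [hz.1, hxm.1]
    have hmono : StrictMonoOn gE (Icc x₀ x₁) := by
      apply strictMonoOn_of_deriv_pos (convex_Icc _ _)
        (hgcont.mono (Icc_subset_Icc hx₀mem.1 hx₁.2))
      intro x hxi
      rw [interior_Icc] at hxi
      have hx0h : 0 < x := lt_of_le_of_lt hx₀mem.1 hxi.1
      have hxh : x < h := lt_of_lt_of_le hxi.2 hx₁.2
      have hxa : x ∈ Icc (0:ℝ) a := ⟨hx0h.le, le_trans hxh.le hha.le⟩
      have hbd : HasDerivAt b (b' x) x :=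
        (hderiv x hxa).hasDerivAt (Icc_mem_nhds hx0h (lt_of_lt_of_le hxh hha.le))
      have hΦdx : HasDerivAt Φ (ft (x, Φ x)) x := hΦd x ⟨hx0h.le, hxh.le⟩
      have hgd : HasDerivAt gE (ft (x, Φ x) - b' x + ε) x := by
        have h1 : HasDerivAt (fun y => ε * y) ε x := by
          simpa using (hasDerivAt_id x).const_mul ε
        exact (hΦdx.sub hbd).add h1
      rw [hgd.deriv]
      have hgneg := hneg x ⟨hxi.1, hxi.2.le⟩
      have hΦlt : Φ x < b x := by
        simp only [hgE_def] at hgneg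
        nlinarith
      have hftx : ft (x, Φ x) = f₀ (x, b x) := by
        show f₀ (σm (x, Φ x)) = f₀ (x, b x)
        have hclx : cl x = x := by
          show max 0 (min x h) = x
          rw [min_eq_left hxh.le, max_eq_right hx0h.le]
        simp only [hσm_def, hclx]
        have h2 : min (Φ x) (b x + x) = Φ x := min_eq_left (by linarith)
        rw [h2, max_eq_left hΦlt.le]
      rw [hftx]
      have := hbc x ⟨hx0h, le_trans hxh.le hha.le⟩
      linarith
    have hmlt := hmono (left_mem_Icc.2 hx₀lt.le) (right_mem_Icc.2 hx₀lt.le) hx₀lt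
    rw [hx₀S.2] at hmlt
    linarith
  have lower : ∀ x ∈ Icc (0:ℝ) h, b x ≤ Φ x := by
    intro x hx
    rcases eq_or_lt_of_le hx.1 with h0 | h0
    · rw [← h0, hb0, hΦ0]
    · by_contra hlt
      push_neg at hlt
      have hεpos : 0 < (b x - Φ x) / (2 * x) := by
        apply div_pos (by linarith) (by linarith)
      have hlow := lowerε _ hεpos x hx
      have heq2 : (b x - Φ x) / (2 * x) * x = (b x - Φ x) / 2 := by
        field_simp
      rw [heq2] at hlow
      linarith
  have hfix : ∀ x ∈ Icc (0:ℝ) h, σm (x, Φ x) = (x, Φ x) := by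
    intro x hx
    have hclx : cl x = x := by
      show max 0 (min x h) = x
      rw [min_eq_left hx.2, max_eq_right hx.1]
    simp only [hσm_def, hclx]
    rw [min_eq_left (upper x hx), max_eq_right (lower x hx)]
  refine ⟨h, ⟨hhpos, hhc⟩, Φ, hΦ0, fun x hx => ⟨?_, ?_⟩⟩
  · exact hKsub ⟨hx, lower x hx, upper x hx⟩
  · have hd := hΦd x hx
    have heq : ft (x, Φ x) = f₀ (x, Φ x) := by
      show f₀ (σm (x, Φ x)) = f₀ (x, Φ x)
      rw [hfix x hx]
    rw [heq] at hd
    exact hd.hasDerivWithinAt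
end

section
/- Theorem 1, case B⁺₁,>,<: Assume there exist a > 0, τᵤ > 0, τₗ > 0 and continuously differentiable functions bᵤ, bₗ : [0,a] → ℝ with bᵤ(0) = bₗ(0) = 0, bᵤ'(x) ≥ τᵤ and bₗ'(x) ≤ −τₗ for all x ∈ [0,a], such that (x, bᵤ(x)) ∈ Ĝ and (x, bₗ(x)) ∈ Ĝ for every x ∈ (0,a], and there exists c ∈ (0,a] such that every point (x,y) with 0 < x ≤ c and bₗ(x) < y < bᵤ(x) belongs to G. Then there exist h ∈ (0,c] and a function φ : [0,h] → ℝ with φ(0) = 0 which is a solution of y' = f₀(x,y) with graph in G̃ on [0,h]. -/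
open Set Metric Filter Topology NNReal

noncomputable def infConv (F : ℝ × ℝ → ℝ) (n : ℕ) (p : ℝ × ℝ) : ℝ :=
  ⨅ z : ℝ, (F (p.1, z) + (n + 1 : ℝ) * |p.2 - z|)

section PeanoAux

variable {F : ℝ × ℝ → ℝ} {D : ℝ}


lemma infConv_bdd (hD : ∀ p, |F p| ≤ D) (n : ℕ) (x y : ℝ) :
    BddBelow (range fun z : ℝ => F (x, z) + (n + 1 : ℝ) * |y - z|) := by
  refine ⟨-D, ?_⟩
  rintro w ⟨z, rfl⟩
  have h1 := abs_le.1 (hD (x, z))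
  have : (0:ℝ) ≤ (n + 1 : ℝ) * |y - z| := by positivity
  simp only []
  linarith [h1.1]

lemma infConv_le_s4 (hD : ∀ p, |F p| ≤ D) (n : ℕ) (p : ℝ × ℝ) : infConv F n p ≤ F p := by
  have := ciInf_le (infConv_bdd hD n p.1 p.2) p.2
  simpa [infConv] using this

lemma le_infConv {a : ℝ} (n : ℕ) (p : ℝ × ℝ)
    (h : ∀ z : ℝ, a ≤ F (p.1, z) + (n + 1 : ℝ) * |p.2 - z|) : a ≤ infConv F n p :=
  le_ciInf h

lemma infConv_lip_s4 (hD : ∀ p, |F p| ≤ D) (n : ℕ) (x y₁ y₂ : ℝ) :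
    infConv F n (x, y₁) ≤ infConv F n (x, y₂) + (n + 1 : ℝ) * |y₁ - y₂| := by
  have : infConv F n (x, y₁) - (n + 1 : ℝ) * |y₁ - y₂| ≤ infConv F n (x, y₂) := by
    refine le_ciInf fun z => ?_
    have h1 : infConv F n (x, y₁) ≤ F (x, z) + (n + 1 : ℝ) * |y₁ - z| :=
      ciInf_le (infConv_bdd hD n x y₁) z
    have h2 : |y₁ - z| ≤ |y₁ - y₂| + |y₂ - z| := abs_sub_le _ _ _
    nlinarith [Nat.cast_nonneg (α := ℝ) n]
  linarith

lemma infConv_xdiff (hD : ∀ p, |F p| ≤ D) {ε : ℝ} (n : ℕ) (x x' y : ℝ)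
    (h : ∀ z : ℝ, |F (x, z) - F (x', z)| ≤ ε) :
    infConv F n (x, y) ≤ infConv F n (x', y) + ε := by
  have : infConv F n (x, y) - ε ≤ infConv F n (x', y) := by
    refine le_ciInf fun z => ?_
    have h1 : infConv F n (x, y) ≤ F (x, z) + (n + 1 : ℝ) * |y - z| :=
      ciInf_le (infConv_bdd hD n x y) z
    have h2 := abs_le.1 (h z)
    linarith [h2.1, h2.2]
  linarith

lemma infConv_strip (hD : ∀ p, |F p| ≤ D) {T C : ℝ}
    (hC : ∀ p : ℝ × ℝ, p.1 ∈ Icc (0:ℝ) T → |F p| ≤ C) (n : ℕ) {x : ℝ} (y : ℝ)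
    (hx : x ∈ Icc (0:ℝ) T) : |infConv F n (x, y)| ≤ C := by
  rw [abs_le]
  constructor
  · refine le_infConv n (x, y) fun z => ?_
    have h1 := (abs_le.1 (hC (x, z) hx)).1
    have : (0:ℝ) ≤ (n + 1 : ℝ) * |y - z| := by positivity
    linarith
  · exact (infConv_le_s4 hD n (x, y)).trans (abs_le.1 (hC (x, y) hx)).2

lemma infConv_abs_sub (hD : ∀ p, |F p| ≤ D) (n : ℕ) (x y₁ y₂ : ℝ) :
    |infConv F n (x, y₁) - infConv F n (x, y₂)| ≤ (n + 1 : ℝ) * |y₁ - y₂| := by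
  rw [abs_sub_le_iff]
  constructor
  · have := infConv_lip_s4 hD n x y₁ y₂; linarith
  · have := infConv_lip_s4 hD n x y₂ y₁
    rw [abs_sub_comm] at this; linarith

lemma infConv_cont (hD : ∀ p, |F p| ≤ D) (hF : UniformContinuous F) (n : ℕ) :
    Continuous (infConv F n) := by
  rw [Metric.continuous_iff]
  intro p ε hε
  obtain ⟨δ₁, hδ₁, hh⟩ := Metric.uniformContinuous_iff.1 hF (ε / 2) (by linarith)
  refine ⟨min δ₁ (ε / (2 * (n + 2))), lt_min hδ₁ (by positivity), fun q hq => ?_⟩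
  have hx : |infConv F n (q.1, q.2) - infConv F n (q.1, p.2)| ≤ (n + 1 : ℝ) * |q.2 - p.2| :=
    infConv_abs_sub hD n _ _ _
  have hy : |infConv F n (q.1, p.2) - infConv F n (p.1, p.2)| ≤ ε / 2 := by
    have key : ∀ x x' : ℝ, dist x x' < δ₁ →
        ∀ z : ℝ, |F (x, z) - F (x', z)| ≤ ε / 2 := by
      intro x x' hxx' z
      have : dist ((x, z) : ℝ × ℝ) (x', z) < δ₁ := by
        rw [Prod.dist_eq]; simp only [dist_self]
        exact max_lt hxx' hδ₁
      exact le_of_lt (by simpa [Real.dist_eq] using hh this)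
    have h1 : dist q.1 p.1 < δ₁ := by
      have : dist q.1 p.1 ≤ dist q p := by rw [Prod.dist_eq]; exact le_max_left _ _
      exact lt_of_le_of_lt this (hq.trans_le (min_le_left _ _))
    rw [abs_sub_le_iff]
    constructor
    · have := infConv_xdiff hD n q.1 p.1 p.2 (key q.1 p.1 h1); linarith
    · have := infConv_xdiff hD n p.1 q.1 p.2 (key p.1 q.1 (by rwa [dist_comm])); linarith
  have h2 : |q.2 - p.2| < ε / (2 * (n + 2)) := by
    have : dist q.2 p.2 ≤ dist q p := by rw [Prod.dist_eq]; exact le_max_right _ _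
    rw [← Real.dist_eq]
    exact lt_of_le_of_lt this (hq.trans_le (min_le_right _ _))
  have h3 : (n + 1 : ℝ) * |q.2 - p.2| < ε / 2 := by
    have hp1 : (0:ℝ) < (n:ℝ) + 1 := by positivity
    have h4 : (n + 1 : ℝ) * |q.2 - p.2| < (n + 1 : ℝ) * (ε / (2 * (n + 2))) :=
      mul_lt_mul_of_pos_left h2 hp1
    have h5 : (n + 1 : ℝ) * (ε / (2 * (n + 2))) ≤ ε / 2 := by
      rw [mul_div_assoc']
      rw [div_le_div_iff₀ (by positivity) (by norm_num)]
      nlinarith [Nat.cast_nonneg (α := ℝ) n]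
    linarith
  rw [Real.dist_eq]
  calc |infConv F n q - infConv F n p|
      ≤ |infConv F n (q.1, q.2) - infConv F n (q.1, p.2)| +
        |infConv F n (q.1, p.2) - infConv F n (p.1, p.2)| := by
        have : (q.1, q.2) = q := rfl
        rw [this]
        have : (p.1, p.2) = p := rfl
        rw [this]
        exact abs_sub_le _ _ _
    _ < ε := by linarith

lemma infConv_unif (hD : ∀ p, |F p| ≤ D) (hF : UniformContinuous F) {ε : ℝ} (hε : 0 < ε) :
    ∃ N : ℕ, ∀ n ≥ N, ∀ p : ℝ × ℝ, |infConv F n p - F p| ≤ ε := by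
  obtain ⟨δ, hδ, hh⟩ := Metric.uniformContinuous_iff.1 hF ε hε
  obtain ⟨N, hN⟩ := exists_nat_ge (2 * D / δ)
  have hD0 : 0 ≤ D := (abs_nonneg _).trans (hD (0, 0))
  refine ⟨N, fun n hn p => ?_⟩
  rw [abs_sub_le_iff]
  constructor
  · have := infConv_le_s4 hD n p; linarith [hε.le]
  · have key : F p - ε ≤ infConv F n p := by
      refine le_infConv n p fun z => ?_
      by_cases hz : |p.2 - z| < δ
      · have hd : dist ((p.1, z) : ℝ × ℝ) p < δ := by
          have : p = (p.1, p.2) := rfl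
          rw [this, Prod.dist_eq]
          simp only [dist_self, Real.dist_eq]
          rw [abs_sub_comm]
          exact max_lt (lt_of_le_of_lt (by simp [abs_nonneg]) hz) hz
        have := hh hd
        rw [Real.dist_eq, abs_sub_lt_iff] at this
        have h2 : (0:ℝ) ≤ (n + 1 : ℝ) * |p.2 - z| := by positivity
        linarith [this.2]
      · push_neg at hz
        have h1 : (2 * D / δ) * δ ≤ ((n:ℝ) + 1) * |p.2 - z| := by
          have hNn : (2 * D / δ) ≤ (n:ℝ) + 1 := by
            have : (N:ℝ) ≤ (n:ℝ) := Nat.cast_le.2 hn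
            linarith
          have : (2 * D / δ) * δ ≤ ((n:ℝ) + 1) * δ :=
            mul_le_mul_of_nonneg_right hNn hδ.le
          refine this.trans (mul_le_mul_of_nonneg_left hz (by positivity))
        rw [div_mul_cancel₀ _ (ne_of_gt hδ)] at h1
        have h2 := (abs_le.1 (hD (p.1, z))).1
        have h3 := (abs_le.1 (hD p)).2
        linarith
    linarith

lemma peano_approx (hF : UniformContinuous F) (hD : ∀ p, |F p| ≤ D) {T C : ℝ} (hT : 0 < T)
    (hC0 : 0 ≤ C) (hC : ∀ p : ℝ × ℝ, p.1 ∈ Icc (0:ℝ) T → |F p| ≤ C) (n : ℕ) :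
    ∃ f : ℝ → ℝ, f 0 = 0 ∧ ∀ t ∈ Icc (0:ℝ) T,
      HasDerivWithinAt f (infConv F n (t, f t)) (Icc (0:ℝ) T) t := by
  have hpl : IsPicardLindelof (fun t y => infConv F n (t, y)) (tmin := 0) (tmax := T)
      ⟨0, left_mem_Icc.2 hT.le⟩ 0 ⟨C * T + 1, by positivity⟩ 0 ⟨C, hC0⟩
      ((n : ℝ≥0) + 1) := by
    refine ⟨?_, ?_, ?_, ?_⟩
    · intro t _
      refine (LipschitzWith.of_dist_le_mul fun y₁ y₂ => ?_).lipschitzOnWith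
      rw [Real.dist_eq, Real.dist_eq]
      have := infConv_abs_sub hD n t y₁ y₂
      push_cast
      linarith
    · intro y _
      exact ((infConv_cont hD hF n).comp (continuous_id.prodMk continuous_const)).continuousOn
    · intro t ht y _
      exact (by simpa [Real.norm_eq_abs] using infConv_strip hD hC n y ht : ‖infConv F n (t, y)‖ ≤ C)
    · show C * max (T - 0) (0 - 0) ≤ (C * T + 1) - 0
      have : max (T - 0) (0 - 0) = T := by
        rw [sub_zero, sub_zero]
        exact max_eq_left hT.le
      rw [this]
      linarith
  obtain ⟨f, hf0, hf⟩ := hpl.exists_eq_forall_mem_Icc_hasDerivWithinAt₀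
  exact ⟨f, hf0, hf⟩

lemma peano (hF : UniformContinuous F) (hD : ∀ p, |F p| ≤ D)
    {T C : ℝ} (hT : 0 < T) (hC0 : 0 ≤ C)
    (hC : ∀ p : ℝ × ℝ, p.1 ∈ Icc (0:ℝ) T → |F p| ≤ C) :
    ∃ φ : ℝ → ℝ, φ 0 = 0 ∧ ∀ x ∈ Icc (0:ℝ) T,
      |φ x| ≤ C * x ∧ HasDerivWithinAt φ (F (x, φ x)) (Icc (0:ℝ) T) x := by
  classical
  choose f hf0 hfD using fun n => peano_approx hF hD hT hC0 hC n
  set Cnn : ℝ≥0 := ⟨C, hC0⟩ with hCnn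
  -- the approximations are uniformly Lipschitz
  have hlip : ∀ n, LipschitzOnWith Cnn (f n) (Icc (0:ℝ) T) := by
    intro n
    refine (convex_Icc (0:ℝ) T).lipschitzOnWith_of_nnnorm_hasDerivWithin_le
      (f' := fun t => infConv F n (t, f n t)) (fun t ht => hfD n t ht) (fun t ht => ?_)
    rw [← NNReal.coe_le_coe, coe_nnnorm, Real.norm_eq_abs]
    exact infConv_strip hD hC n (f n t) ht
  have hcont : ∀ n, ContinuousOn (f n) (Icc (0:ℝ) T) := fun n => (hlip n).continuousOn
  -- joint continuity of composite integrands
  have hHcont : ∀ n, ContinuousOn (fun t => infConv F n (t, f n t)) (Icc (0:ℝ) T) :=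
    fun n => (infConv_cont hD hF n).comp_continuousOn
      (continuousOn_id.prodMk (hcont n))
  -- integral equation for the approximations
  have hInt : ∀ n, ∀ x ∈ Icc (0:ℝ) T,
      ∫ t in (0:ℝ)..x, infConv F n (t, f n t) = f n x := by
    intro n x hx
    have hsub : Icc (0:ℝ) x ⊆ Icc (0:ℝ) T := Icc_subset_Icc le_rfl hx.2
    have := intervalIntegral.integral_eq_sub_of_hasDeriv_right_of_le hx.1
      ((hcont n).mono hsub)
      (fun t ht => (((hfD n t ⟨ht.1.le, ht.2.le.trans hx.2⟩).hasDerivAt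
        (Icc_mem_nhds ht.1 (lt_of_lt_of_le ht.2 hx.2))).hasDerivWithinAt))
      (((hHcont n).mono hsub).intervalIntegrable_of_Icc hx.1)
    rw [this, hf0 n, sub_zero]
  -- pass to the space of continuous maps on the compact interval
  haveI : CompactSpace (Icc (0:ℝ) T) := isCompact_iff_compactSpace.1 isCompact_Icc
  set z0 : Icc (0:ℝ) T := ⟨0, left_mem_Icc.2 hT.le⟩ with hz0
  set gm : ℕ → C(Icc (0:ℝ) T, ℝ) := fun n => ⟨fun x => f n x.1, (hcont n).restrict⟩ with hgm
  set S : Set C(Icc (0:ℝ) T, ℝ) :=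
    {g | LipschitzWith Cnn (g : Icc (0:ℝ) T → ℝ) ∧ g z0 = 0} with hS
  have hmem : ∀ n, gm n ∈ S := fun n =>
    ⟨(hlip n).to_restrict, hf0 n⟩
  -- Arzelà–Ascoli
  have hdistz : ∀ x : Icc (0:ℝ) T, dist x z0 ≤ T := by
    intro x
    rw [Subtype.dist_eq, Real.dist_eq, hz0]
    rw [abs_of_nonneg (by simpa using x.2.1)]
    simpa using x.2.2
  have hbound : ∀ g : Icc (0:ℝ) T → ℝ, LipschitzWith Cnn g → g z0 = 0 →
      ∀ x, g x ∈ Icc (-(C * T)) (C * T) := by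
    intro g hg hgz x
    have := hg.dist_le_mul x z0
    rw [hgz, Real.dist_eq, sub_zero] at this
    have h2 : (Cnn : ℝ) * dist x z0 ≤ C * T := by
      have : (Cnn : ℝ) = C := rfl
      rw [this]
      exact mul_le_mul_of_nonneg_left (hdistz x) hC0
    rw [mem_Icc, ← abs_le]
    exact le_trans ‹|g x| ≤ (Cnn : ℝ) * dist x z0› h2
  have hScomp : IsCompact S := by
    refine ArzelaAscoli.isCompact_of_equicontinuous S ?_ ?_
    · have himg : (ContinuousMap.toFun '' S) =
          {g : Icc (0:ℝ) T → ℝ | LipschitzWith Cnn g ∧ g z0 = 0} := by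
        ext g
        constructor
        · rintro ⟨g', hg', rfl⟩; exact hg'
        · intro hg
          exact ⟨⟨g, hg.1.continuous⟩, hg, rfl⟩
      rw [himg]
      refine IsCompact.of_isClosed_subset
        (isCompact_univ_pi fun _ => isCompact_Icc (a := -(C*T)) (b := C*T)) ?_ ?_
      · exact (isClosed_setOf_lipschitzWith Cnn).inter
          (isClosed_eq (continuous_apply z0) continuous_const)
      · intro g hg
        exact fun x _ => hbound g hg.1 hg.2 x
    · refine equicontinuous_of_continuity_modulus (fun d => C * d) ?_ _ ?_
      · have : Continuous fun d : ℝ => C * d := continuous_const.mul continuous_id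
        simpa using this.tendsto 0
      · intro x y i
        have := (i : C(Icc (0:ℝ) T, ℝ)) |>.2
        have h := i.2.1.dist_le_mul x y
        exact h
  -- extract a convergent subsequence
  obtain ⟨u, huS, ns, hns, hconv⟩ := hScomp.isSeqCompact (fun n => hmem n)
  -- the limit function
  set ψ : ℝ → ℝ := fun x => u (projIcc 0 T hT.le x) with hψ
  have hψc : Continuous ψ := u.continuous.comp continuous_projIcc
  have hψeq : ∀ x (hx : x ∈ Icc (0:ℝ) T), ψ x = u ⟨x, hx⟩ := by
    intro x hx
    simp [hψ, projIcc_of_mem hT.le hx]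
  set g : ℝ → ℝ := fun t => F (t, ψ t) with hg
  have hgc : Continuous g := hF.continuous.comp (continuous_id.prodMk hψc)
  -- pointwise convergence
  have hptwise : ∀ x (hx : x ∈ Icc (0:ℝ) T),
      Tendsto (fun k => f (ns k) x) atTop (𝓝 (u ⟨x, hx⟩)) := by
    intro x hx
    have : Tendsto (fun k => (gm (ns k)) ⟨x, hx⟩) atTop (𝓝 (u ⟨x, hx⟩)) :=
      ((continuous_eval_const (⟨x, hx⟩ : Icc (0:ℝ) T)).tendsto u).comp hconv
    exact this
  -- convergence of the integrals
  have hintconv : ∀ x (hx : x ∈ Icc (0:ℝ) T),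
      Tendsto (fun k => ∫ t in (0:ℝ)..x, infConv F (ns k) (t, f (ns k) t)) atTop
        (𝓝 (∫ t in (0:ℝ)..x, g t)) := by
    intro x hx
    rw [Metric.tendsto_atTop]
    intro ε hε
    have hT1 : (0:ℝ) < T + 1 := by linarith
    set ε' : ℝ := ε / (2 * (T + 1)) with hε'
    have hε'pos : 0 < ε' := by positivity
    obtain ⟨δ, hδ, hδf⟩ := Metric.uniformContinuous_iff.1 hF ε' hε'pos
    obtain ⟨N₁, hN₁⟩ := infConv_unif hD hF hε'pos
    obtain ⟨N₂, hN₂⟩ := (Metric.tendsto_atTop.1 hconv) δ hδ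
    refine ⟨max N₁ N₂, fun k hk => ?_⟩
    have hk1 : N₁ ≤ ns k := le_trans (le_max_left _ _) (le_trans hk (hns.le_apply))
    have hk2 : N₂ ≤ k := le_trans (le_max_right _ _) hk
    -- pointwise bound on the integrand difference
    have hbnd : ∀ t ∈ Icc (0:ℝ) x, |infConv F (ns k) (t, f (ns k) t) - g t| ≤ 2 * ε' := by
      intro t ht
      have htT : t ∈ Icc (0:ℝ) T := ⟨ht.1, ht.2.trans hx.2⟩
      have h1 : |infConv F (ns k) (t, f (ns k) t) - F (t, f (ns k) t)| ≤ ε' :=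
        hN₁ (ns k) hk1 _
      have h2 : |F (t, f (ns k) t) - F (t, ψ t)| ≤ ε' := by
        have hdd : dist ((t, f (ns k) t) : ℝ × ℝ) (t, ψ t) < δ := by
          rw [Prod.dist_eq]
          simp only [dist_self]
          have : dist (f (ns k) t) (ψ t) < δ := by
            have := ContinuousMap.dist_apply_le_dist (f := gm (ns k)) (g := u) ⟨t, htT⟩
            have h3 : dist (gm (ns k)) u < δ := hN₂ k hk2
            calc dist (f (ns k) t) (ψ t) = dist ((gm (ns k)) ⟨t, htT⟩) (u ⟨t, htT⟩) := by
                  rw [hψeq t htT]; rfl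
              _ ≤ dist (gm (ns k)) u := ContinuousMap.dist_apply_le_dist _
              _ < δ := h3
          exact max_lt hδ this
        exact le_of_lt (by simpa [Real.dist_eq] using hδf hdd)
      have : g t = F (t, ψ t) := rfl
      rw [this]
      calc |infConv F (ns k) (t, f (ns k) t) - F (t, ψ t)|
          ≤ |infConv F (ns k) (t, f (ns k) t) - F (t, f (ns k) t)| +
            |F (t, f (ns k) t) - F (t, ψ t)| := abs_sub_le _ _ _
        _ ≤ 2 * ε' := by linarith
    -- integrability
    have hint1 : IntervalIntegrable (fun t => infConv F (ns k) (t, f (ns k) t))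
        MeasureTheory.volume 0 x :=
      ((hHcont (ns k)).mono (Icc_subset_Icc le_rfl hx.2)).intervalIntegrable_of_Icc hx.1
    have hint2 : IntervalIntegrable g MeasureTheory.volume 0 x := hgc.intervalIntegrable 0 x
    rw [Real.dist_eq, ← intervalIntegral.integral_sub hint1 hint2]
    have hb : ‖∫ t in (0:ℝ)..x, (infConv F (ns k) (t, f (ns k) t) - g t)‖ ≤ 2 * ε' * |x - 0| := by
      refine intervalIntegral.norm_integral_le_of_norm_le_const fun t ht => ?_
      rw [uIoc_of_le hx.1] at ht
      rw [Real.norm_eq_abs]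
      exact hbnd t ⟨ht.1.le, ht.2⟩
    have hxT : |x - 0| ≤ T := by
      rw [sub_zero, abs_of_nonneg hx.1]; exact hx.2
    have h5 : 2 * ε' * (T + 1) = ε := by
      rw [hε']; field_simp
    have h6 : 2 * ε' * |x - 0| ≤ 2 * ε' * T :=
      mul_le_mul_of_nonneg_left hxT (by positivity)
    rw [Real.norm_eq_abs] at hb
    calc |∫ t in (0:ℝ)..x, (infConv F (ns k) (t, f (ns k) t) - g t)| ≤ 2 * ε' * |x - 0| := hb
      _ ≤ 2 * ε' * T := h6
      _ < ε := by linarith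
  -- the limit satisfies the integral equation
  have ueq : ∀ x (hx : x ∈ Icc (0:ℝ) T), u ⟨x, hx⟩ = ∫ t in (0:ℝ)..x, g t := by
    intro x hx
    have h1 : Tendsto (fun k => ∫ t in (0:ℝ)..x, infConv F (ns k) (t, f (ns k) t)) atTop
        (𝓝 (u ⟨x, hx⟩)) :=
      Filter.Tendsto.congr (fun k => (hInt (ns k) x hx).symm) (hptwise x hx)
    exact tendsto_nhds_unique h1 (hintconv x hx)
  -- conclusion
  have hφD : ∀ x : ℝ, HasDerivAt (fun y => ∫ t in (0:ℝ)..y, g t) (g x) x := fun x =>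
    (hgc.integral_hasStrictDerivAt 0 x).hasDerivAt
  have hψ0 : ψ 0 = 0 := by
    rw [hψeq 0 (left_mem_Icc.2 hT.le)]
    exact huS.2
  refine ⟨ψ, hψ0, fun x hx => ⟨?_, ?_⟩⟩
  · have h1 := huS.1.dist_le_mul ⟨x, hx⟩ z0
    have h2 : dist (⟨x, hx⟩ : Icc (0:ℝ) T) z0 = x := by
      rw [Subtype.dist_eq, Real.dist_eq, hz0]
      simpa using abs_of_nonneg hx.1
    rw [huS.2, dist_zero_right, Real.norm_eq_abs, h2] at h1
    rw [hψeq x hx]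
    exact h1
  · have heq : ∀ y ∈ Icc (0:ℝ) T, ψ y = ∫ t in (0:ℝ)..y, g t := fun y hy => by
      rw [hψeq y hy, ueq y hy]
    have hd := ((hφD x).hasDerivWithinAt (s := Icc (0:ℝ) T)).congr heq (heq x hx)
    exact hd

end PeanoAux

lemma uc_max {β : Type*} [PseudoMetricSpace β] {f g : β → ℝ}
    (hf : UniformContinuous f) (hg : UniformContinuous g) :
    UniformContinuous fun p => max (f p) (g p) := by
  rw [Metric.uniformContinuous_iff] at hf hg ⊢
  intro ε hε
  obtain ⟨δ₁, hδ₁, h1⟩ := hf ε hε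
  obtain ⟨δ₂, hδ₂, h2⟩ := hg ε hε
  refine ⟨min δ₁ δ₂, lt_min hδ₁ hδ₂, fun {p q} hpq => ?_⟩
  have e1 := h1 (hpq.trans_le (min_le_left _ _))
  have e2 := h2 (hpq.trans_le (min_le_right _ _))
  rw [Real.dist_eq] at e1 e2 ⊢
  exact lt_of_le_of_lt (abs_max_sub_max_le_max _ _ _ _) (max_lt e1 e2)

lemma uc_min {β : Type*} [PseudoMetricSpace β] {f g : β → ℝ}
    (hf : UniformContinuous f) (hg : UniformContinuous g) :
    UniformContinuous fun p => min (f p) (g p) := by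
  rw [Metric.uniformContinuous_iff] at hf hg ⊢
  intro ε hε
  obtain ⟨δ₁, hδ₁, h1⟩ := hf ε hε
  obtain ⟨δ₂, hδ₂, h2⟩ := hg ε hε
  refine ⟨min δ₁ δ₂, lt_min hδ₁ hδ₂, fun {p q} hpq => ?_⟩
  have e1 := h1 (hpq.trans_le (min_le_left _ _))
  have e2 := h2 (hpq.trans_le (min_le_right _ _))
  rw [Real.dist_eq] at e1 e2 ⊢
  exact lt_of_le_of_lt (abs_min_sub_min_le_max _ _ _ _) (max_lt e1 e2)

/-- Theorem 1, case B⁺₁,>,<. -/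
theorem theorem1_case_B1_gt_lt
    (G Ghat : Set (ℝ × ℝ)) (hGopen : IsOpen G) (hGhat : Ghat ⊆ frontier G)
    (f₀ : ℝ × ℝ → ℝ) (hf : ContinuousOn f₀ (G ∪ Ghat))
    (hO : ((0 : ℝ), (0 : ℝ)) ∈ Ghat) (hf0 : f₀ (0, 0) = 0)
    (a τu τl : ℝ) (ha : 0 < a) (hτu : 0 < τu) (hτl : 0 < τl)
    (bu bu' bl bl' : ℝ → ℝ)
    (hderivu : ∀ x ∈ Icc (0 : ℝ) a, HasDerivWithinAt bu (bu' x) (Icc (0 : ℝ) a) x)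
    (hbu'cont : ContinuousOn bu' (Icc (0 : ℝ) a))
    (hderivl : ∀ x ∈ Icc (0 : ℝ) a, HasDerivWithinAt bl (bl' x) (Icc (0 : ℝ) a) x)
    (hbl'cont : ContinuousOn bl' (Icc (0 : ℝ) a))
    (hbu0 : bu 0 = 0) (hbl0 : bl 0 = 0)
    (hbu'τ : ∀ x ∈ Icc (0 : ℝ) a, τu ≤ bu' x)
    (hbl'τ : ∀ x ∈ Icc (0 : ℝ) a, bl' x ≤ -τl)
    (hcurveu : ∀ x ∈ Ioc (0 : ℝ) a, (x, bu x) ∈ Ghat)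
    (hcurvel : ∀ x ∈ Ioc (0 : ℝ) a, (x, bl x) ∈ Ghat)
    (c : ℝ) (hc : c ∈ Ioc (0 : ℝ) a)
    (hin : ∀ x y : ℝ, 0 < x → x ≤ c → bl x < y → y < bu x → (x, y) ∈ G) :
    ∃ h ∈ Ioc (0 : ℝ) c, ∃ φ : ℝ → ℝ, φ 0 = 0 ∧
      ∀ x ∈ Icc (0 : ℝ) h, (x, φ x) ∈ G ∪ Ghat ∧
        HasDerivWithinAt φ (f₀ (x, φ x)) (Icc (0 : ℝ) h) x := by
  obtain ⟨hc0, hca⟩ := hc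
  have hbucont : ContinuousOn bu (Icc 0 a) := fun x hx => (hderivu x hx).continuousWithinAt
  have hblcont : ContinuousOn bl (Icc 0 a) := fun x hx => (hderivl x hx).continuousWithinAt
  -- growth bounds from the mean value theorem
  have hbuge : ∀ x ∈ Icc (0:ℝ) a, τu * x ≤ bu x := by
    have hmono : MonotoneOn (fun x => bu x - τu * x) (Icc 0 a) := by
      refine monotoneOn_of_hasDerivWithinAt_nonneg (convex_Icc 0 a)
        (hbucont.sub ((continuous_const.mul continuous_id).continuousOn))
        (f' := fun x => bu' x - τu) (fun x hx => ?_) (fun x hx => ?_)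
      · have hxI : x ∈ Icc (0:ℝ) a := interior_subset hx
        exact ((hderivu x hxI).mono interior_subset).sub
          (by simpa using (hasDerivWithinAt_id x (interior (Icc (0:ℝ) a))).const_mul τu)
      · have hxI : x ∈ Icc (0:ℝ) a := interior_subset hx
        have h := hbu'τ x hxI
        show (0:ℝ) ≤ bu' x - τu
        linarith
    intro x hx
    have := hmono (left_mem_Icc.2 ha.le) hx hx.1
    simp only [hbu0, mul_zero, sub_zero] at this
    linarith
  have hblle : ∀ x ∈ Icc (0:ℝ) a, bl x ≤ -(τl * x) := by
    have hmono : MonotoneOn (fun x => -bl x - τl * x) (Icc 0 a) := by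
      refine monotoneOn_of_hasDerivWithinAt_nonneg (convex_Icc 0 a)
        ((hblcont.neg).sub ((continuous_const.mul continuous_id).continuousOn))
        (f' := fun x => -bl' x - τl) (fun x hx => ?_) (fun x hx => ?_)
      · have hxI : x ∈ Icc (0:ℝ) a := interior_subset hx
        exact (((hderivl x hxI).mono interior_subset).neg).sub
          (by simpa using (hasDerivWithinAt_id x (interior (Icc (0:ℝ) a))).const_mul τl)
      · have hxI : x ∈ Icc (0:ℝ) a := interior_subset hx
        have h := hbl'τ x hxI
        show (0:ℝ) ≤ -bl' x - τl
        linarith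
    intro x hx
    have := hmono (left_mem_Icc.2 ha.le) hx hx.1
    simp only [hbl0, mul_zero, sub_zero, neg_zero] at this
    linarith
  -- the comparison parameter
  set ε : ℝ := min τu τl / 2 with hεdef
  have hε : 0 < ε := by
    have := lt_min hτu hτl
    positivity
  have hετu : ε < τu := by
    have h1 : min τu τl ≤ τu := min_le_left _ _
    have : ε ≤ τu / 2 := by rw [hεdef]; linarith
    linarith
  have hετl : ε < τl := by
    have h1 : min τu τl ≤ τl := min_le_right _ _
    have : ε ≤ τl / 2 := by rw [hεdef]; linarith
    linarith
  -- continuity of f₀ at the origin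
  have hcw := hf (0, 0) (Or.inr hO)
  rw [Metric.continuousWithinAt_iff] at hcw
  obtain ⟨δ, hδ, hδf⟩ := hcw ε hε
  -- smallness of bu and bl near 0
  have hbu0c := hbucont 0 ⟨le_rfl, ha.le⟩
  rw [Metric.continuousWithinAt_iff] at hbu0c
  obtain ⟨h₁, hh₁, hbu0c⟩ := hbu0c δ hδ
  have hbl0c := hblcont 0 ⟨le_rfl, ha.le⟩
  rw [Metric.continuousWithinAt_iff] at hbl0c
  obtain ⟨h₂, hh₂, hbl0c⟩ := hbl0c δ hδ
  -- the height of the final interval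
  set h : ℝ := min c (min (h₁ / 2) (min (h₂ / 2) (δ / 2))) with hhdef
  have hh0 : 0 < h := by
    refine lt_min hc0 (lt_min (by linarith) (lt_min (by linarith) (by linarith)))
  have hhc : h ≤ c := min_le_left _ _
  have hhh₁ : h < h₁ := lt_of_le_of_lt ((min_le_right _ _).trans (min_le_left _ _)) (by linarith)
  have hhh₂ : h < h₂ :=
    lt_of_le_of_lt ((min_le_right _ _).trans ((min_le_right _ _).trans (min_le_left _ _)))
      (by linarith)
  have hhδ : h < δ :=
    lt_of_le_of_lt ((min_le_right _ _).trans ((min_le_right _ _).trans (min_le_right _ _)))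
      (by linarith)
  -- the retraction onto the funnel
  set clamp : ℝ → ℝ := fun x => max 0 (min x c) with hclampdef
  have hclampmem : ∀ x, clamp x ∈ Icc (0:ℝ) c := fun x =>
    ⟨le_max_left _ _, max_le hc0.le (min_le_right x c)⟩
  have hclampeq : ∀ x ∈ Icc (0:ℝ) c, clamp x = x := fun x hx => by
    rw [hclampdef]; simp only []; rw [min_eq_left hx.2, max_eq_right hx.1]
  have hclampcont : Continuous clamp := continuous_const.max (continuous_id.min continuous_const)
  have hclamplip : LipschitzWith 1 clamp := (LipschitzWith.id.min_const c).const_max 0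
  have hIccsub : Icc (0:ℝ) c ⊆ Icc 0 a := Icc_subset_Icc le_rfl hca
  set Bu : ℝ → ℝ := fun x => bu (clamp x) with hBudef
  set Bl : ℝ → ℝ := fun x => bl (clamp x) with hBldef
  have hBucont : Continuous Bu :=
    hbucont.comp_continuous hclampcont fun x => hIccsub (hclampmem x)
  have hBlcont : Continuous Bl :=
    hblcont.comp_continuous hclampcont fun x => hIccsub (hclampmem x)
  set r : ℝ × ℝ → ℝ × ℝ := fun p => (clamp p.1, max (Bl p.1) (min p.2 (Bu p.1))) with hrdef
  have hrcont : Continuous r := (hclampcont.comp continuous_fst).prodMk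
    ((hBlcont.comp continuous_fst).max (continuous_snd.min (hBucont.comp continuous_fst)))
  have hblbu : ∀ x ∈ Icc (0:ℝ) c, bl x ≤ bu x := by
    intro x hx
    have h1 := hblle x (hIccsub hx)
    have h2 := hbuge x (hIccsub hx)
    nlinarith [hx.1, hτu.le, hτl.le]
  set K : Set (ℝ × ℝ) := {q | q.1 ∈ Icc (0:ℝ) c ∧ q.2 ∈ Icc (bl q.1) (bu q.1)} with hKdef
  have hrK : ∀ p, r p ∈ K := by
    intro p
    refine ⟨hclampmem p.1, le_max_left _ _, ?_⟩
    exact max_le (hblbu _ (hclampmem p.1)) (min_le_right _ _)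
  have hrfix : ∀ p ∈ K, r p = p := by
    rintro ⟨x, y⟩ ⟨hx, hy⟩
    have hcx : clamp x = x := hclampeq x hx
    have hBux : Bu x = bu x := by rw [hBudef]; simp only []; rw [hcx]
    have hBlx : Bl x = bl x := by rw [hBldef]; simp only []; rw [hcx]
    rw [hrdef]
    simp only []
    rw [hcx, hBux, hBlx, min_eq_left hy.2, max_eq_right hy.1]
  have hKsub : K ⊆ G ∪ Ghat := by
    rintro ⟨x, y⟩ ⟨hx, hy⟩
    dsimp only at hx hy
    rcases eq_or_lt_of_le hx.1 with h0 | h0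
    · have hx0 : x = 0 := h0.symm
      subst hx0
      have hy0 : y = 0 := le_antisymm (by rw [hbu0] at hy; exact hy.2)
        (by rw [hbl0] at hy; exact hy.1)
      subst hy0
      exact Or.inr hO
    · rcases eq_or_lt_of_le hy.1 with hbl1 | hbl1
      · refine Or.inr ?_
        rw [← hbl1]
        exact hcurvel x ⟨h0, hx.2.trans hca⟩
      · rcases eq_or_lt_of_le hy.2 with hbu1 | hbu1
        · refine Or.inr ?_
          rw [hbu1]
          exact hcurveu x ⟨h0, hx.2.trans hca⟩
        · exact Or.inl (hin x y h0 hx.2 hbl1 hbu1)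
  -- K is compact
  obtain ⟨M₁, hM₁⟩ := (isCompact_Icc (a := (0:ℝ)) (b := a)).exists_bound_of_continuousOn hbucont
  obtain ⟨M₂, hM₂⟩ := (isCompact_Icc (a := (0:ℝ)) (b := a)).exists_bound_of_continuousOn hblcont
  set B : ℝ := |M₁| + |M₂| + 1 with hBdef
  have hKbox : K ⊆ Icc (0:ℝ) c ×ˢ Icc (-B) B := by
    rintro ⟨x, y⟩ ⟨hx, hy⟩
    refine ⟨hx, ?_, ?_⟩
    · have := hM₂ x (hIccsub hx)
      rw [Real.norm_eq_abs] at this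
      have h2 : -B ≤ bl x := by
        rw [hBdef]
        have h3 := neg_abs_le (bl x)
        have h4 : M₂ ≤ |M₂| := le_abs_self M₂
        linarith [abs_nonneg M₁]
      linarith [hy.1]
    · have := hM₁ x (hIccsub hx)
      rw [Real.norm_eq_abs] at this
      have h3 : bu x ≤ B := by
        have := le_abs_self (bu x)
        rw [hBdef]
        have h4 : |M₁| ≥ M₁ := le_abs_self M₁
        linarith [abs_nonneg M₂]
      linarith [hy.2]
  have hKeq : K = r '' (Icc (0:ℝ) c ×ˢ Icc (-B) B) := by
    apply subset_antisymm
    · intro p hp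
      exact ⟨p, hKbox hp, hrfix p hp⟩
    · rintro _ ⟨q, _, rfl⟩
      exact hrK q
  have hKcomp : IsCompact K := by
    rw [hKeq]
    exact (isCompact_Icc.prod isCompact_Icc).image hrcont
  -- the extended right-hand side
  set F : ℝ × ℝ → ℝ := fun p => f₀ (r p) with hFdef
  obtain ⟨D, hDb⟩ := hKcomp.exists_bound_of_continuousOn (hf.mono hKsub)
  have hD : ∀ p, |F p| ≤ D := fun p => by
    have := hDb (r p) (hrK p)
    rwa [Real.norm_eq_abs] at this
  -- uniform continuity of F
  have hbuuc := isCompact_Icc.uniformContinuousOn_of_continuous hbucont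
  have hbluc := isCompact_Icc.uniformContinuousOn_of_continuous hblcont
  have hBuuc : UniformContinuous Bu := by
    rw [Metric.uniformContinuous_iff]
    intro ε' hε'
    obtain ⟨δ', hδ', hd⟩ := Metric.uniformContinuousOn_iff.1 hbuuc ε' hε'
    refine ⟨δ', hδ', fun {x y} hxy => ?_⟩
    refine hd (clamp x) (hIccsub (hclampmem x)) (clamp y) (hIccsub (hclampmem y)) ?_
    have := hclamplip.dist_le_mul x y
    simp only [NNReal.coe_one, one_mul] at this
    exact lt_of_le_of_lt this hxy
  have hBluc : UniformContinuous Bl := by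
    rw [Metric.uniformContinuous_iff]
    intro ε' hε'
    obtain ⟨δ', hδ', hd⟩ := Metric.uniformContinuousOn_iff.1 hbluc ε' hε'
    refine ⟨δ', hδ', fun {x y} hxy => ?_⟩
    refine hd (clamp x) (hIccsub (hclampmem x)) (clamp y) (hIccsub (hclampmem y)) ?_
    have := hclamplip.dist_le_mul x y
    simp only [NNReal.coe_one, one_mul] at this
    exact lt_of_le_of_lt this hxy
  have hruc : UniformContinuous r := by
    refine UniformContinuous.prodMk ?_ ?_
    · exact hclamplip.uniformContinuous.comp uniformContinuous_fst
    · exact uc_max (hBluc.comp uniformContinuous_fst)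
        (uc_min uniformContinuous_snd (hBuuc.comp uniformContinuous_fst))
  have hf₀K := hKcomp.uniformContinuousOn_of_continuous (hf.mono hKsub)
  have hFuc : UniformContinuous F := by
    rw [Metric.uniformContinuous_iff]
    intro ε' hε'
    obtain ⟨δ₁, hδ₁, hd₁⟩ := Metric.uniformContinuousOn_iff.1 hf₀K ε' hε'
    obtain ⟨δ₂, hδ₂, hd₂⟩ := Metric.uniformContinuous_iff.1 hruc δ₁ hδ₁
    refine ⟨δ₂, hδ₂, fun {p q} hpq => ?_⟩
    exact hd₁ (r p) (hrK p) (r q) (hrK q) (hd₂ hpq)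
  -- smallness of F on the strip
  have hCs : ∀ p : ℝ × ℝ, p.1 ∈ Icc (0:ℝ) h → |F p| ≤ ε := by
    intro p hp
    have hp1c : p.1 ∈ Icc (0:ℝ) c := ⟨hp.1, hp.2.trans hhc⟩
    have hxa : p.1 ∈ Icc (0:ℝ) a := hIccsub hp1c
    have hdist1 : dist p.1 (0:ℝ) = p.1 := by rw [Real.dist_eq, sub_zero, abs_of_nonneg hp.1]
    have hbusm : |bu p.1| < δ := by
      have := hbu0c hxa (by rw [hdist1]; exact lt_of_le_of_lt hp.2 hhh₁)
      rwa [Real.dist_eq, hbu0, sub_zero] at this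
    have hblsm : |bl p.1| < δ := by
      have := hbl0c hxa (by rw [hdist1]; exact lt_of_le_of_lt hp.2 hhh₂)
      rwa [Real.dist_eq, hbl0, sub_zero] at this
    have hrp1 : (r p).1 = p.1 := by rw [hrdef]; exact hclampeq p.1 hp1c
    obtain ⟨hm1, hm2⟩ := hrK p
    rw [hrp1] at hm2
    have habs2 : |(r p).2| < δ := by
      rw [abs_lt]
      constructor
      · linarith [(abs_lt.1 hblsm).1, hm2.1]
      · linarith [(abs_lt.1 hbusm).2, hm2.2]
    have hdd : dist (r p) ((0:ℝ), (0:ℝ)) < δ := by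
      rw [Prod.dist_eq]
      refine max_lt ?_ ?_
      · rw [hrp1, hdist1]
        exact lt_of_le_of_lt hp.2 hhδ
      · rw [Real.dist_eq, sub_zero]
        exact habs2
    have := hδf (hKsub (hrK p)) hdd
    rw [hf0, Real.dist_eq, sub_zero] at this
    exact this.le
  -- apply the Peano existence theorem
  obtain ⟨ψ, hψ0, hψ⟩ := peano hFuc hD hh0 hε.le hCs
  refine ⟨h, ⟨hh0, hhc⟩, ψ, hψ0, fun x hx => ?_⟩
  obtain ⟨hbd, hder⟩ := hψ x hx
  have hxc : x ∈ Icc (0:ℝ) c := ⟨hx.1, hx.2.trans hhc⟩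
  have hxa2 : x ∈ Icc (0:ℝ) a := hIccsub hxc
  have habs := abs_le.1 hbd
  have hup : ψ x ≤ bu x := by
    have h1 := hbuge x hxa2
    have h2 : ε * x ≤ τu * x := mul_le_mul_of_nonneg_right hετu.le hx.1
    linarith [habs.2]
  have hlo : bl x ≤ ψ x := by
    have h1 := hblle x hxa2
    have h2 : ε * x ≤ τl * x := mul_le_mul_of_nonneg_right hετl.le hx.1
    linarith [habs.1]
  have hKmem : ((x, ψ x) : ℝ × ℝ) ∈ K := ⟨hxc, hlo, hup⟩
  constructor
  · rcases eq_or_lt_of_le hx.1 with h0 | h0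
    · rw [← h0, hψ0]
      exact Or.inr hO
    · refine Or.inl (hin x (ψ x) h0 (hx.2.trans hhc) ?_ ?_)
      · have h1 := hblle x hxa2
        have h2 : ε * x < τl * x := mul_lt_mul_of_pos_right hετl h0
        linarith [habs.1]
      · have h1 := hbuge x hxa2
        have h2 : ε * x < τu * x := mul_lt_mul_of_pos_right hετu h0
        linarith [habs.2]
  · have hfix := hrfix _ hKmem
    have hFeq : F (x, ψ x) = f₀ (x, ψ x) := by
      rw [hFdef]
      simp only []
      rw [hfix]
    rwa [hFeq] at hder
end
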